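/- arXiv:2006.04583 — 2 statements merged into one kernel-verified Lean document; each statement's English description precedes it below -/
import Mathlib

section
/- Let H be a finite simple graph and let G = KB(H) be its biclique graph. Then every induced path on three vertices of G is contained in an induced diamond or an induced gem of G; that is, for all vertices a, b, c of G with b adjacent to both a and c and a not adjacent to c, there exists a set S of vertices of G with {a,b,c} ⊆ S such that the subgraph of G induced by S is isomorphic to the diamond or to the gem. -/
open SimpleGraph

variable {V : Type}

/-- `B1`, `B2` are the two (nonempty) parts of an induced complete bipartite subgraph:
they are disjoint, each part is independent, and all edges between the parts are present. -/
def IsCBP (H : SimpleGraph V) (B1 B2 : Set V) : Prop :=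
  B1.Nonempty ∧ B2.Nonempty ∧ Disjoint B1 B2 ∧
    (∀ a ∈ B1, ∀ b ∈ B1, ¬H.Adj a b) ∧
    (∀ a ∈ B2, ∀ b ∈ B2, ¬H.Adj a b) ∧
    (∀ a ∈ B1, ∀ b ∈ B2, H.Adj a b)

/-- A set of vertices inducing a complete bipartite subgraph `K_{m,n}`, `m, n ≥ 1`. -/
def IsCompleteBipartiteSet (H : SimpleGraph V) (S : Set V) : Prop :=
  ∃ B1 B2 : Set V, IsCBP H B1 B2 ∧ B1 ∪ B2 = S

/-- A biclique: a maximal set of vertices inducing a complete bipartite subgraph. -/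
def IsBiclique (H : SimpleGraph V) (S : Set V) : Prop :=
  IsCompleteBipartiteSet H S ∧
    ∀ T : Set V, IsCompleteBipartiteSet H T → S ⊆ T → S = T

/-- The biclique graph `KB(H)`: the intersection graph of the bicliques of `H`. -/
def KB (H : SimpleGraph V) : SimpleGraph {S : Set V // IsBiclique H S} :=
  SimpleGraph.fromRel fun A B => (A.1 ∩ B.1).Nonempty

/-- The diamond: `K_4` minus one edge (here the edge `{0,1}` is missing). -/
def diamond : SimpleGraph (Fin 4) :=
  SimpleGraph.fromRel fun i j =>
    (i, j) ∈ [((0 : Fin 4), (2 : Fin 4)), (0, 3), (1, 2), (1, 3), (2, 3)]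

/-- The gem: an induced path `0-1-2-3` plus a universal vertex `4`. -/
def gem : SimpleGraph (Fin 5) :=
  SimpleGraph.fromRel fun i j =>
    (i, j) ∈ [((0 : Fin 5), (1 : Fin 5)), (1, 2), (2, 3), (0, 4), (1, 4), (2, 4), (3, 4)]

lemma exists_biclique_superset [Fintype V] {H : SimpleGraph V} {S : Set V}
    (h : IsCompleteBipartiteSet H S) : ∃ T, IsBiclique H T ∧ S ⊆ T := by
  obtain ⟨T, hT, hmax⟩ := Set.Finite.exists_maximalFor id
    {T | IsCompleteBipartiteSet H T ∧ S ⊆ T} (Set.toFinite _) ⟨S, h, le_refl S⟩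
  refine ⟨T, ⟨hT.1, ?_⟩, hT.2⟩
  intro T' hT' hsub
  exact hsub.antisymm (hmax ⟨hT', hT.2.trans hsub⟩ hsub)

-- an edge extends to a biclique
lemma ext2 [Fintype V] {H : SimpleGraph V} {z t : V} (h : H.Adj z t) :
    ∃ E, IsBiclique H E ∧ z ∈ E ∧ t ∈ E := by
  have hcbp : IsCompleteBipartiteSet H {z, t} := by
    refine ⟨{z}, {t}, ⟨⟨z, rfl⟩, ⟨t, rfl⟩, ?_, ?_, ?_, ?_⟩, by
      rw [Set.singleton_union]⟩
    · simp [Set.disjoint_singleton, h.ne]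
    · rintro a rfl b rfl; exact H.irrefl
    · rintro a rfl b rfl; exact H.irrefl
    · rintro a rfl b rfl; exact h
  obtain ⟨E, hE, hsub⟩ := exists_biclique_superset hcbp
  exact ⟨E, hE, hsub (by simp), hsub (by simp)⟩

-- an induced path (t1 - z - t2) extends to a biclique
lemma ext3 [Fintype V] {H : SimpleGraph V} {z t1 t2 : V} (h1 : H.Adj z t1) (h2 : H.Adj z t2)
    (h12 : ¬H.Adj t1 t2) (hne : t1 ≠ t2) :
    ∃ E, IsBiclique H E ∧ z ∈ E ∧ t1 ∈ E ∧ t2 ∈ E := by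
  have hcbp : IsCompleteBipartiteSet H {z, t1, t2} := by
    refine ⟨{z}, {t1, t2}, ⟨⟨z, rfl⟩, ⟨t1, by simp⟩, ?_, ?_, ?_, ?_⟩, by
      rw [Set.singleton_union]⟩
    · simp only [Set.disjoint_singleton_left, Set.mem_insert_iff, Set.mem_singleton_iff]
      push_neg
      exact ⟨h1.ne, h2.ne⟩
    · rintro a rfl b rfl; exact H.irrefl
    · rintro a (rfl | rfl) b (rfl | rfl)
      · exact H.irrefl
      · exact h12
      · exact fun h => h12 h.symm
      · exact H.irrefl
    · rintro a rfl b (rfl | rfl)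
      · exact h1
      · exact h2
  obtain ⟨E, hE, hsub⟩ := exists_biclique_superset hcbp
  exact ⟨E, hE, hsub (by simp), hsub (by simp), hsub (by simp)⟩

-- distinct bicliques give a separating element
lemma biclique_exists_not_mem {H : SimpleGraph V} {A B : Set V}
    (hA : IsBiclique H A) (hB : IsBiclique H B) (hne : A ≠ B) :
    ∃ u ∈ A, u ∉ B := by
  by_contra h
  push_neg at h
  exact hne (hA.2 B hB.1 h)

-- in a biclique: if s ~ x2 and x1,x2 ∈ B with ¬ x1 ~ x2, then s ~ x1 (s,x1,x2 ∈ B)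
lemma biclique_adj_trans {H : SimpleGraph V} {B : Set V} (hB : IsBiclique H B)
    {s x1 x2 : V} (hs : s ∈ B) (hx1 : x1 ∈ B) (hx2 : x2 ∈ B)
    (h1 : H.Adj s x2) (h2 : ¬H.Adj x1 x2) : H.Adj s x1 := by
  obtain ⟨⟨P, Q, ⟨_, _, _, hPind, hQind, hcross⟩, rfl⟩, -⟩ := hB
  have memcase : ∀ v, v ∈ P ∪ Q → v ∈ P ∨ v ∈ Q := fun v hv => hv
  rcases memcase _ hx2 with h2P | h2Q
  · rcases memcase _ hx1 with h1P | h1Q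
    · rcases memcase _ hs with hsP | hsQ
      · exact absurd h1 (hPind s hsP x2 h2P)
      · exact (hcross x1 h1P s hsQ).symm
    · exact absurd (hcross x2 h2P x1 h1Q).symm h2
  · rcases memcase _ hx1 with h1P | h1Q
    · exact absurd (hcross x1 h1P x2 h2Q) h2
    · rcases memcase _ hs with hsP | hsQ
      · exact hcross s hsP x1 h1Q
      · exact absurd h1 (hQind s hsQ x2 h2Q)

-- common neighbour inside a biclique of two nonadjacent members
lemma biclique_common_nbr {H : SimpleGraph V} {B : Set V} (hB : IsBiclique H B)
    {x1 x2 : V} (hx1 : x1 ∈ B) (hx2 : x2 ∈ B) (hne : x1 ≠ x2) (hnadj : ¬H.Adj x1 x2) :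
    ∃ y ∈ B, H.Adj y x1 ∧ H.Adj y x2 := by
  obtain ⟨⟨P, Q, ⟨⟨p0, hp0⟩, ⟨q0, hq0⟩, _, hPind, hQind, hcross⟩, rfl⟩, -⟩ := hB
  rcases hx1 with h1P | h1Q
  · rcases hx2 with h2P | h2Q
    · exact ⟨q0, Or.inr hq0, (hcross x1 h1P q0 hq0).symm, (hcross x2 h2P q0 hq0).symm⟩
    · exact absurd (hcross x1 h1P x2 h2Q) hnadj
  · rcases hx2 with h2P | h2Q
    · exact absurd (hcross x2 h2P x1 h1Q).symm hnadj
    · exact ⟨p0, Or.inl hp0, hcross p0 hp0 x1 h1Q, hcross p0 hp0 x2 h2Q⟩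

section Main
variable [Fintype V] {H : SimpleGraph V} {A B C : Set V}

lemma lem1 (hA : IsBiclique H A) (hB : IsBiclique H B) (hC : IsBiclique H C)
    (hstar : ∀ D, IsBiclique H D → (D ∩ A).Nonempty → (D ∩ B).Nonempty → (D ∩ C).Nonempty → D = B)
    (hAC : ∀ t, t ∈ A → t ∈ C → False) (hABne : A ≠ B)
    {v1 v2 : V} (hv1A : v1 ∈ A) (hv1B : v1 ∈ B) (hv2C : v2 ∈ C) (hv2B : v2 ∈ B) :
    ∃ x1 x2, x1 ∈ A ∧ x1 ∈ B ∧ x2 ∈ C ∧ x2 ∈ B ∧ ¬H.Adj x1 x2 ∧ x1 ≠ x2 := by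
  by_cases hv : H.Adj v1 v2
  · obtain ⟨u, huA, huB⟩ := biclique_exists_not_mem hA hB hABne
    have hu2 : ¬H.Adj u v2 := by
      intro h
      obtain ⟨E, hE, huE, hv2E⟩ := ext2 h
      exact huB (hstar E hE ⟨u, huE, huA⟩ ⟨v2, hv2E, hv2B⟩ ⟨v2, hv2E, hv2C⟩ ▸ huE)
    have hu1 : ¬H.Adj u v1 := by
      intro h
      obtain ⟨E, hE, hv1E, huE, hv2E⟩ := ext3 h.symm hv hu2 (fun he => huB (he ▸ hv2B))
      exact huB (hstar E hE ⟨v1, hv1E, hv1A⟩ ⟨v1, hv1E, hv1B⟩ ⟨v2, hv2E, hv2C⟩ ▸ huE)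
    obtain ⟨q, hqA, hqu, hq1⟩ :=
      biclique_common_nbr hA huA hv1A (fun he => huB (he ▸ hv1B)) hu1
    have hq2 : ¬H.Adj q v2 := by
      intro h
      obtain ⟨E, hE, hqE, huE, hv2E⟩ := ext3 hqu h hu2 (fun he => huB (he ▸ hv2B))
      exact huB (hstar E hE ⟨q, hqE, hqA⟩ ⟨v2, hv2E, hv2B⟩ ⟨v2, hv2E, hv2C⟩ ▸ huE)
    have hqv2 : q ≠ v2 := fun he => hAC q hqA (he ▸ hv2C)
    have hqB : q ∈ B := by
      obtain ⟨E, hE, hv1E, hqE, hv2E⟩ := ext3 hq1.symm hv hq2 hqv2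
      exact hstar E hE ⟨v1, hv1E, hv1A⟩ ⟨v1, hv1E, hv1B⟩ ⟨v2, hv2E, hv2C⟩ ▸ hqE
    exact ⟨q, v2, hqA, hqB, hv2C, hv2B, hq2, hqv2⟩
  · exact ⟨v1, v2, hv1A, hv1B, hv2C, hv2B, hv, fun he => hAC v1 hv1A (he ▸ hv2C)⟩

lemma lem2 (hA : IsBiclique H A) (hB : IsBiclique H B) (hC : IsBiclique H C)
    (hstar : ∀ D, IsBiclique H D → (D ∩ A).Nonempty → (D ∩ B).Nonempty → (D ∩ C).Nonempty → D = B)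
    (hAC : ∀ t, t ∈ A → t ∈ C → False) (hABne : A ≠ B) (hCBne : C ≠ B)
    {x1 x2 y : V} (hx1A : x1 ∈ A) (hx1B : x1 ∈ B) (hx2C : x2 ∈ C) (hx2B : x2 ∈ B)
    (hnadj : ¬H.Adj x1 x2) (hy1 : H.Adj y x1) (hy2 : H.Adj y x2) :
    ∃ D, IsBiclique H D ∧ y ∈ D ∧ (D ∩ A).Nonempty ∧ D ≠ A ∧ D ≠ B ∧ D ≠ C := by
  have hx12 : x1 ≠ x2 := fun he => hAC x1 hx1A (he ▸ hx2C)
  have hyB : y ∈ B := by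
    obtain ⟨E, hE, hyE, hx1E, hx2E⟩ := ext3 hy1 hy2 hnadj hx12
    exact hstar E hE ⟨x1, hx1E, hx1A⟩ ⟨x1, hx1E, hx1B⟩ ⟨x2, hx2E, hx2C⟩ ▸ hyE
  by_contra hno
  have hdio : ∀ E, IsBiclique H E → y ∈ E → (E ∩ A).Nonempty → E = A ∨ E = B := by
    intro E hE hyE hEA
    by_contra hcon
    push_neg at hcon
    obtain ⟨t, htE, htA⟩ := hEA
    exact hno ⟨E, hE, hyE, ⟨t, htE, htA⟩, hcon.1, hcon.2,
      fun he => hAC t htA (he ▸ htE)⟩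
  -- Step 1 : y ∉ A
  have hyA : y ∉ A := by
    intro hyA
    obtain ⟨w, hwC, hwB⟩ := biclique_exists_not_mem hC hB hCBne
    have hw1 : ¬H.Adj w x1 := by
      intro h
      obtain ⟨E, hE, hwE, hx1E⟩ := ext2 h
      exact hwB (hstar E hE ⟨x1, hx1E, hx1A⟩ ⟨x1, hx1E, hx1B⟩ ⟨w, hwE, hwC⟩ ▸ hwE)
    have hwy : ¬H.Adj w y := by
      intro h
      obtain ⟨E, hE, hwE, hyE⟩ := ext2 h
      exact hwB (hstar E hE ⟨y, hyE, hyA⟩ ⟨y, hyE, hyB⟩ ⟨w, hwE, hwC⟩ ▸ hwE)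
    have hw2 : ¬H.Adj w x2 := by
      intro h
      obtain ⟨E, hE, hx2E, hwE, hyE⟩ := ext3 h.symm hy2.symm hwy (fun he => hwB (he ▸ hyB))
      exact hwB (hstar E hE ⟨y, hyE, hyA⟩ ⟨x2, hx2E, hx2B⟩ ⟨w, hwE, hwC⟩ ▸ hwE)
    obtain ⟨s, hsC, hsw, hs2⟩ :=
      biclique_common_nbr hC hwC hx2C (fun he => hwB (he ▸ hx2B)) hw2
    have hsB : s ∈ B := by
      by_cases hsy : H.Adj s y
      · obtain ⟨E, hE, hsE, hyE⟩ := ext2 hsy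
        exact hstar E hE ⟨y, hyE, hyA⟩ ⟨y, hyE, hyB⟩ ⟨s, hsE, hsC⟩ ▸ hsE
      · obtain ⟨E, hE, hx2E, hsE, hyE⟩ :=
          ext3 hs2.symm hy2.symm hsy (fun he => absurd (he ▸ hsC) (fun hyC => hAC y hyA hyC))
        exact hstar E hE ⟨y, hyE, hyA⟩ ⟨x2, hx2E, hx2B⟩ ⟨s, hsE, hsC⟩ ▸ hsE
    have hs1 : H.Adj s x1 := biclique_adj_trans hB hsB hx1B hx2B hs2 hnadj
    obtain ⟨E, hE, hsE, hwE, hx1E⟩ :=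
      ext3 hsw hs1 hw1 (fun he => hAC x1 hx1A (he ▸ hwC))
    exact hwB (hstar E hE ⟨x1, hx1E, hx1A⟩ ⟨s, hsE, hsB⟩ ⟨w, hwE, hwC⟩ ▸ hwE)
  -- Step 2
  obtain ⟨u, huA, huB⟩ := biclique_exists_not_mem hA hB hABne
  have hu2 : ¬H.Adj u x2 := by
    intro h
    obtain ⟨E, hE, huE, hx2E⟩ := ext2 h
    exact huB (hstar E hE ⟨u, huE, huA⟩ ⟨x2, hx2E, hx2B⟩ ⟨x2, hx2E, hx2C⟩ ▸ huE)
  have huy : ¬H.Adj u y := by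
    intro h
    obtain ⟨E, hE, huE, hyE⟩ := ext2 h
    rcases hdio E hE hyE ⟨u, huE, huA⟩ with he | he
    · exact hyA (he ▸ hyE)
    · exact huB (he ▸ huE)
  have hu1 : ¬H.Adj u x1 := by
    intro h
    obtain ⟨E, hE, hx1E, huE, hyE⟩ := ext3 h.symm hy1.symm huy (fun he => huB (he ▸ hyB))
    rcases hdio E hE hyE ⟨x1, hx1E, hx1A⟩ with he | he
    · exact hyA (he ▸ hyE)
    · exact huB (he ▸ huE)
  obtain ⟨q, hqA, hqu, hq1⟩ :=
    biclique_common_nbr hA huA hx1A (fun he => huB (he ▸ hx1B)) hu1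
  have hqy : ¬H.Adj q y := by
    intro h
    obtain ⟨E, hE, hqE, huE, hyE⟩ := ext3 hqu h huy (fun he => huB (he ▸ hyB))
    rcases hdio E hE hyE ⟨q, hqE, hqA⟩ with he | he
    · exact hyA (he ▸ hyE)
    · exact huB (he ▸ huE)
  have hqB : q ∈ B := by
    obtain ⟨E, hE, hx1E, hqE, hyE⟩ :=
      ext3 hq1.symm hy1.symm hqy (fun he => hyA (he ▸ hqA))
    rcases hdio E hE hyE ⟨x1, hx1E, hx1A⟩ with he | he
    · exact absurd (he ▸ hyE) hyA
    · exact he ▸ hqE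
  have hq2 : H.Adj q x2 :=
    biclique_adj_trans hB hqB hx2B hx1B hq1 (fun h => hnadj h.symm)
  obtain ⟨E, hE, hqE, huE, hx2E⟩ := ext3 hqu hq2 hu2 (fun he => huB (he ▸ hx2B))
  exact huB (hstar E hE ⟨u, huE, huA⟩ ⟨q, hqE, hqB⟩ ⟨x2, hx2E, hx2C⟩ ▸ huE)

end Main

instance (i j : Fin 4) : Decidable (diamond.Adj i j) :=
  decidable_of_iff _ (SimpleGraph.fromRel_adj _ i j).symm
instance (i j : Fin 5) : Decidable (gem.Adj i j) :=
  decidable_of_iff _ (SimpleGraph.fromRel_adj _ i j).symm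

lemma induced_iso_of {α : Type} {n : ℕ} (G : SimpleGraph α) (G' : SimpleGraph (Fin n))
    (f : Fin n → α) (hinj : Function.Injective f)
    (h : ∀ i j, G'.Adj i j ↔ G.Adj (f i) (f j)) :
    Nonempty (SimpleGraph.induce (Set.range f) G ≃g G') := by
  refine ⟨⟨(Equiv.ofInjective f hinj).symm, ?_⟩⟩
  intro p q
  have hp : f ((Equiv.ofInjective f hinj).symm p) = p.1 :=
    congrArg Subtype.val ((Equiv.ofInjective f hinj).apply_symm_apply p)
  have hq : f ((Equiv.ofInjective f hinj).symm q) = q.1 :=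
    congrArg Subtype.val ((Equiv.ofInjective f hinj).apply_symm_apply q)
  rw [h, hp, hq]
  rfl

lemma kb_adj {H : SimpleGraph V} {p q : {S : Set V // IsBiclique H S}} (hne : p ≠ q)
    (h : (p.1 ∩ q.1).Nonempty ∨ (q.1 ∩ p.1).Nonempty) : (KB H).Adj p q := by
  rw [KB, fromRel_adj]; exact ⟨hne, h⟩
lemma kb_nadj {H : SimpleGraph V} {p q : {S : Set V // IsBiclique H S}}
    (h : ∀ t, t ∈ p.1 → t ∈ q.1 → False) : ¬(KB H).Adj p q := by
  rw [KB, fromRel_adj]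
  rintro ⟨-, ⟨t, h1, h2⟩ | ⟨t, h1, h2⟩⟩
  · exact h t h1 h2
  · exact h t h2 h1

/-- Every induced `P_3` of a biclique graph is contained in an induced diamond or gem. -/
theorem stmt_0 {V : Type} [Fintype V] (H : SimpleGraph V)
    (a b c : {S : Set V // IsBiclique H S})
    (hab : (KB H).Adj b a) (hbc : (KB H).Adj b c)
    (hac : ¬(KB H).Adj a c) (hne : a ≠ c) :
    ∃ S : Set {S : Set V // IsBiclique H S}, {a, b, c} ⊆ S ∧
      (Nonempty (SimpleGraph.induce S (KB H) ≃g diamond) ∨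
        Nonempty (SimpleGraph.induce S (KB H) ≃g gem)) := by
  have hba : b ≠ a := hab.ne
  have hbc' : b ≠ c := hbc.ne
  obtain ⟨v1, hv1B, hv1A⟩ : ∃ v, v ∈ b.1 ∧ v ∈ a.1 := by
    rw [KB, fromRel_adj] at hab
    rcases hab.2 with ⟨t, h1, h2⟩ | ⟨t, h1, h2⟩
    · exact ⟨t, h1, h2⟩
    · exact ⟨t, h2, h1⟩
  obtain ⟨v2, hv2B, hv2C⟩ : ∃ v, v ∈ b.1 ∧ v ∈ c.1 := by
    rw [KB, fromRel_adj] at hbc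
    rcases hbc.2 with ⟨t, h1, h2⟩ | ⟨t, h1, h2⟩
    · exact ⟨t, h1, h2⟩
    · exact ⟨t, h2, h1⟩
  have hACdisj : ∀ t, t ∈ a.1 → t ∈ c.1 → False := by
    intro t h1 h2
    rw [KB, fromRel_adj] at hac
    exact hac ⟨hne, Or.inl ⟨t, h1, h2⟩⟩
  have hsne : ∀ {p q : {S : Set V // IsBiclique H S}}, p.1 ≠ q.1 → p ≠ q :=
    fun h he => h (congrArg Subtype.val he)
  by_cases hdia : ∃ D, IsBiclique H D ∧ (D ∩ a.1).Nonempty ∧ (D ∩ b.1).Nonempty ∧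
      (D ∩ c.1).Nonempty ∧ D ≠ a.1 ∧ D ≠ b.1 ∧ D ≠ c.1
  · -- diamond
    obtain ⟨D, hD, hDa, hDb, hDc, hnea, hneb, hnec⟩ := hdia
    set d : {S : Set V // IsBiclique H S} := ⟨D, hD⟩ with hd
    have hda : d ≠ a := hsne hnea
    have hdb : d ≠ b := hsne hneb
    have hdc : d ≠ c := hsne hnec
    have hADJad : (KB H).Adj a d := kb_adj hda.symm (Or.inr hDa)
    have hADJcd : (KB H).Adj c d := kb_adj hdc.symm (Or.inr hDc)
    have hADJbd : (KB H).Adj b d := kb_adj hdb.symm (Or.inr hDb)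
    have hnac : ¬(KB H).Adj c a := fun h => hac h.symm
    refine ⟨Set.range ![a, c, b, d], ?_, Or.inl (induced_iso_of _ _ _ ?_ ?_)⟩
    · intro x hx
      rcases hx with rfl | rfl | rfl
      · exact ⟨0, rfl⟩
      · exact ⟨2, rfl⟩
      · exact ⟨1, rfl⟩
    · intro i j hij
      fin_cases i <;> fin_cases j <;>
        first
          | rfl
          | exact absurd hij hne | exact absurd hij hne.symm
          | exact absurd hij hba | exact absurd hij hba.symm
          | exact absurd hij hbc' | exact absurd hij hbc'.symm
          | exact absurd hij hda | exact absurd hij hda.symm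
          | exact absurd hij hdb | exact absurd hij hdb.symm
          | exact absurd hij hdc | exact absurd hij hdc.symm
    · intro i j
      fin_cases i <;> fin_cases j <;>
        first
          | exact iff_of_false (by decide) (SimpleGraph.irrefl _)
          | exact iff_of_true (by decide) hab.symm
          | exact iff_of_true (by decide) hab
          | exact iff_of_true (by decide) hbc
          | exact iff_of_true (by decide) hbc.symm
          | exact iff_of_true (by decide) hADJad
          | exact iff_of_true (by decide) hADJad.symm
          | exact iff_of_true (by decide) hADJcd
          | exact iff_of_true (by decide) hADJcd.symm
          | exact iff_of_true (by decide) hADJbd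
          | exact iff_of_true (by decide) hADJbd.symm
          | exact iff_of_false (by decide) hac
          | exact iff_of_false (by decide) hnac
  · -- gem
    have hstar : ∀ D, IsBiclique H D → (D ∩ a.1).Nonempty → (D ∩ b.1).Nonempty →
        (D ∩ c.1).Nonempty → D = b.1 := by
      intro D hD h1 h2 h3
      by_contra hDb
      obtain ⟨t, htD, htc⟩ := id h3
      obtain ⟨t', ht'D, ht'a⟩ := id h1
      exact hdia ⟨D, hD, h1, h2, h3, fun he => hACdisj t (he ▸ htD) htc, hDb,
        fun he => hACdisj t' ht'a (he ▸ ht'D)⟩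
    have hABne : a.1 ≠ b.1 := fun h => hba (Subtype.ext h.symm)
    have hCBne : c.1 ≠ b.1 := fun h => hbc' (Subtype.ext h.symm)
    obtain ⟨x1, x2, hx1A, hx1B, hx2C, hx2B, hnadj, hx12⟩ :=
      lem1 a.2 b.2 c.2 hstar hACdisj hABne hv1A hv1B hv2C hv2B
    obtain ⟨y, hyB, hy1, hy2⟩ := biclique_common_nbr b.2 hx1B hx2B hx12 hnadj
    obtain ⟨D2, hD2, hyD2, hD2A, hD2nea, hD2neb, hD2nec⟩ :=
      lem2 a.2 b.2 c.2 hstar hACdisj hABne hCBne hx1A hx1B hx2C hx2B hnadj hy1 hy2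
    have hstar' : ∀ D, IsBiclique H D → (D ∩ c.1).Nonempty → (D ∩ b.1).Nonempty →
        (D ∩ a.1).Nonempty → D = b.1 := fun D hD h1 h2 h3 => hstar D hD h3 h2 h1
    obtain ⟨D1, hD1, hyD1, hD1C, hD1nec, hD1neb, hD1nea⟩ :=
      lem2 c.2 b.2 a.2 hstar' (fun t h1 h2 => hACdisj t h2 h1) hCBne hABne
        hx2C hx2B hx1A hx1B (fun h => hnadj h.symm) hy2 hy1
    have hD1A : ∀ t, t ∈ D1 → t ∈ a.1 → False := by
      intro t h1 h2
      exact hD1neb (hstar D1 hD1 ⟨t, h1, h2⟩ ⟨y, hyD1, hyB⟩ hD1C)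
    have hD2C : ∀ t, t ∈ D2 → t ∈ c.1 → False := by
      intro t h1 h2
      exact hD2neb (hstar D2 hD2 hD2A ⟨y, hyD2, hyB⟩ ⟨t, h1, h2⟩)
    have hD12 : D1 ≠ D2 := by
      intro h
      obtain ⟨t, h1, h2⟩ := hD2A
      exact hD1A t (h ▸ h1) h2
    set d1 : {S : Set V // IsBiclique H S} := ⟨D1, hD1⟩ with hd1
    set d2 : {S : Set V // IsBiclique H S} := ⟨D2, hD2⟩ with hd2
    have hd1a : d1 ≠ a := hsne hD1nea
    have hd1b : d1 ≠ b := hsne hD1neb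
    have hd1c : d1 ≠ c := hsne hD1nec
    have hd2a : d2 ≠ a := hsne hD2nea
    have hd2b : d2 ≠ b := hsne hD2neb
    have hd2c : d2 ≠ c := hsne hD2nec
    have hd12 : d1 ≠ d2 := hsne hD12
    have A01 : (KB H).Adj a d2 := kb_adj hd2a.symm (Or.inr hD2A)
    have A12 : (KB H).Adj d2 d1 := kb_adj hd12.symm (Or.inl ⟨y, hyD2, hyD1⟩)
    have A23 : (KB H).Adj d1 c := kb_adj hd1c (Or.inl hD1C)
    have A14 : (KB H).Adj d2 b := kb_adj hd2b (Or.inl ⟨y, hyD2, hyB⟩)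
    have A24 : (KB H).Adj d1 b := kb_adj hd1b (Or.inl ⟨y, hyD1, hyB⟩)
    have N02 : ¬(KB H).Adj a d1 := kb_nadj (fun t h1 h2 => hD1A t h2 h1)
    have N13 : ¬(KB H).Adj d2 c := kb_nadj hD2C
    have hnac : ¬(KB H).Adj c a := fun h => hac h.symm
    refine ⟨Set.range ![a, d2, d1, c, b], ?_, Or.inr (induced_iso_of _ _ _ ?_ ?_)⟩
    · intro x hx
      rcases hx with rfl | rfl | rfl
      · exact ⟨0, rfl⟩
      · exact ⟨4, rfl⟩
      · exact ⟨3, rfl⟩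
    · intro i j hij
      fin_cases i <;> fin_cases j <;>
        first
          | rfl
          | exact absurd hij hne | exact absurd hij hne.symm
          | exact absurd hij hba | exact absurd hij hba.symm
          | exact absurd hij hbc' | exact absurd hij hbc'.symm
          | exact absurd hij hd1a | exact absurd hij hd1a.symm
          | exact absurd hij hd1b | exact absurd hij hd1b.symm
          | exact absurd hij hd1c | exact absurd hij hd1c.symm
          | exact absurd hij hd2a | exact absurd hij hd2a.symm
          | exact absurd hij hd2b | exact absurd hij hd2b.symm
          | exact absurd hij hd2c | exact absurd hij hd2c.symm
          | exact absurd hij hd12 | exact absurd hij hd12.symm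
    · intro i j
      fin_cases i <;> fin_cases j <;>
        first
          | exact iff_of_false (by decide) (SimpleGraph.irrefl _)
          | exact iff_of_true (by decide) A01 | exact iff_of_true (by decide) A01.symm
          | exact iff_of_true (by decide) A12 | exact iff_of_true (by decide) A12.symm
          | exact iff_of_true (by decide) A23 | exact iff_of_true (by decide) A23.symm
          | exact iff_of_true (by decide) hab.symm | exact iff_of_true (by decide) hab
          | exact iff_of_true (by decide) A14 | exact iff_of_true (by decide) A14.symm
          | exact iff_of_true (by decide) A24 | exact iff_of_true (by decide) A24.symm
          | exact iff_of_true (by decide) hbc.symm | exact iff_of_true (by decide) hbc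
          | exact iff_of_false (by decide) N02 | exact iff_of_false (by decide) (fun h => N02 h.symm)
          | exact iff_of_false (by decide) hac | exact iff_of_false (by decide) hnac
          | exact iff_of_false (by decide) N13 | exact iff_of_false (by decide) (fun h => N13 h.symm)
end

section
/- Let H be a finite connected simple graph with no false twins and at least 7 vertices, and let B be a biclique of H with parts B_1 and B_2 such that either some part has at least 3 vertices (i.e., K_{1,3} ⊆ B) or both parts have exactly 2 vertices (i.e., B induces a C_4). Then at least 3 bicliques of H distinct from B have nonempty intersection with B; equivalently, the vertex of KB(H) corresponding to B has degree at least 3. -/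
open SimpleGraph

variable {V : Type}

namespace BicliqueAux

variable {H : SimpleGraph V}

/-- T3 -/
lemma cbp_trans {T : Set V} (hT : IsCompleteBipartiteSet H T) {a b c : V}
    (ha : a ∈ T) (hb : b ∈ T) (hc : c ∈ T) (hab : ¬H.Adj a b) (hac : H.Adj a c) :
    H.Adj b c := by
  obtain ⟨P, Q, ⟨-, -, _, hPind, hQind, hPQ⟩, rfl⟩ := hT
  rcases ha with ha | ha
  · have hcQ : c ∈ Q := by
      rcases hc with hc | hc
      · exact absurd hac (hPind a ha c hc)
      · exact hc
    rcases hb with hb | hb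
    · exact hPQ b hb c hcQ
    · exact absurd (hPQ a ha b hb) hab
  · have hcP : c ∈ P := by
      rcases hc with hc | hc
      · exact hc
      · exact absurd hac (hQind a ha c hc)
    rcases hb with hb | hb
    · exact absurd ((hPQ b hb a ha).symm) hab
    · exact (hPQ c hcP b hb).symm

/-- T4 -/
lemma cbp_quad {T : Set V} (hT : IsCompleteBipartiteSet H T) {x x' w w' : V}
    (hx : x ∈ T) (hx' : x' ∈ T) (hw : w ∈ T) (hw' : w' ∈ T)
    (hxx' : H.Adj x x') (hwx : H.Adj w x) (hw'x' : H.Adj w' x') :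
    H.Adj w w' := by
  obtain ⟨P, Q, ⟨-, -, _, hPind, hQind, hPQ⟩, rfl⟩ := hT
  rcases hx with hx | hx
  · have hx'Q : x' ∈ Q := by
      rcases hx' with h | h
      · exact absurd hxx' (hPind x hx x' h)
      · exact h
    have hwQ : w ∈ Q := by
      rcases hw with h | h
      · exact absurd hwx (hPind w h x hx)
      · exact h
    have hw'P : w' ∈ P := by
      rcases hw' with h | h
      · exact h
      · exact absurd hw'x' (hQind w' h x' hx'Q)
    exact (hPQ w' hw'P w hwQ).symm
  · have hx'P : x' ∈ P := by
      rcases hx' with h | h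
      · exact h
      · exact absurd hxx' (hQind x hx x' h)
    have hwP : w ∈ P := by
      rcases hw with h | h
      · exact h
      · exact absurd hwx (hQind w h x hx)
    have hw'Q : w' ∈ Q := by
      rcases hw' with h | h
      · exact absurd hw'x' (hPind w' h x' hx'P)
      · exact h
    exact hPQ w hwP w' hw'Q

/-- T7 -/
lemma cbp_not_mem {T : Set V} (hT : IsCompleteBipartiteSet H T) {a b z : V}
    (ha : a ∈ T) (hb : b ∈ T) (hab : H.Adj a b)
    (hza : ¬H.Adj z a) (hzb : ¬H.Adj z b) : z ∉ T := by
  intro hz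
  obtain ⟨P, Q, ⟨-, -, _, hPind, hQind, hPQ⟩, rfl⟩ := hT
  rcases ha with ha | ha
  · have hbQ : b ∈ Q := by
      rcases hb with h | h
      · exact absurd hab (hPind a ha b h)
      · exact h
    rcases hz with hz | hz
    · exact hzb (hPQ z hz b hbQ)
    · exact hza ((hPQ a ha z hz).symm)
  · have hbP : b ∈ P := by
      rcases hb with h | h
      · exact h
      · exact absurd hab (hQind a ha b h)
    rcases hz with hz | hz
    · exact hza (hPQ z hz a ha)
    · exact hzb ((hPQ b hbP z hz).symm)

/-- T8 : no triangles -/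
lemma cbp_no_triangle {T : Set V} (hT : IsCompleteBipartiteSet H T) {a b c : V}
    (ha : a ∈ T) (hb : b ∈ T) (hc : c ∈ T)
    (hab : H.Adj a b) (hbc : H.Adj b c) (hac : H.Adj a c) : False := by
  obtain ⟨P, Q, ⟨-, -, _, hPind, hQind, hPQ⟩, rfl⟩ := hT
  rcases ha with ha | ha
  · have hbQ : b ∈ Q := by
      rcases hb with h | h
      · exact absurd hab (hPind a ha b h)
      · exact h
    have hcQ : c ∈ Q := by
      rcases hc with h | h
      · exact absurd hac (hPind a ha c h)
      · exact h
    exact hQind b hbQ c hcQ hbc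
  · have hbP : b ∈ P := by
      rcases hb with h | h
      · exact h
      · exact absurd hab (hQind a ha b h)
    have hcP : c ∈ P := by
      rcases hc with h | h
      · exact h
      · exact absurd hac (hQind a ha c h)
    exact hPind b hbP c hcP hbc

lemma cbp_pair {a b : V} (h : H.Adj a b) : IsCompleteBipartiteSet H {a, b} := by
  refine ⟨{a}, {b}, ⟨⟨a, rfl⟩, ⟨b, rfl⟩, ?_, ?_, ?_, ?_⟩, ?_⟩
  · simp [Set.disjoint_singleton, h.ne]
  · rintro x rfl y rfl; exact H.irrefl
  · rintro x rfl y rfl; exact H.irrefl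
  · rintro x rfl y rfl; exact h
  · ext x; simp; tauto

/-- cherry with two-element part first: parts {a,b}, {c} -/
lemma cbp_cherry {a b c : V} (hac : H.Adj a c) (hbc : H.Adj b c) (hab : ¬H.Adj a b) :
    IsCompleteBipartiteSet H {a, b, c} := by
  refine ⟨{a, b}, {c}, ⟨⟨a, Or.inl rfl⟩, ⟨c, rfl⟩, ?_, ?_, ?_, ?_⟩, ?_⟩
  · rw [Set.disjoint_right]
    rintro x rfl
    simp only [Set.mem_insert_iff, Set.mem_singleton_iff, not_or]
    exact ⟨hac.ne', hbc.ne'⟩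
  · rintro x (rfl | rfl) y (rfl | rfl)
    · exact H.irrefl
    · exact hab
    · exact fun h => hab h.symm
    · exact H.irrefl
  · rintro x rfl y rfl; exact H.irrefl
  · rintro x (rfl | rfl) y rfl
    · exact hac
    · exact hbc
  · ext x; simp; tauto

/-- cherry with singleton part first: parts {a}, {b,c} ; a adjacent to b and c -/
lemma cbp_cherry' {a b c : V} (hab : H.Adj a b) (hac : H.Adj a c) (hbc : ¬H.Adj b c) :
    IsCompleteBipartiteSet H {a, b, c} := by
  refine ⟨{a}, {b, c}, ⟨⟨a, rfl⟩, ⟨b, Or.inl rfl⟩, ?_, ?_, ?_, ?_⟩, ?_⟩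
  · rw [Set.disjoint_left]
    rintro x rfl
    simp only [Set.mem_insert_iff, Set.mem_singleton_iff, not_or]
    exact ⟨hab.ne, hac.ne⟩
  · rintro x rfl y rfl; exact H.irrefl
  · rintro x (rfl | rfl) y (rfl | rfl)
    · exact H.irrefl
    · exact hbc
    · exact fun h => hbc h.symm
    · exact H.irrefl
  · rintro x rfl y (rfl | rfl)
    · exact hab
    · exact hac
  · ext x; simp; tauto

/-- claw: parts {a,b,c}, {d} -/
lemma cbp_claw {a b c d : V} (had : H.Adj a d) (hbd : H.Adj b d) (hcd : H.Adj c d)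
    (hab : ¬H.Adj a b) (hac : ¬H.Adj a c) (hbc : ¬H.Adj b c) :
    IsCompleteBipartiteSet H {a, b, c, d} := by
  refine ⟨{a, b, c}, {d}, ⟨⟨a, Or.inl rfl⟩, ⟨d, rfl⟩, ?_, ?_, ?_, ?_⟩, ?_⟩
  · rw [Set.disjoint_right]
    rintro x rfl
    simp only [Set.mem_insert_iff, Set.mem_singleton_iff, not_or]
    exact ⟨had.ne', hbd.ne', hcd.ne'⟩
  · rintro x (rfl | rfl | rfl) y (rfl | rfl | rfl)
    · exact H.irrefl
    · exact hab
    · exact hac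
    · exact fun h => hab h.symm
    · exact H.irrefl
    · exact hbc
    · exact fun h => hac h.symm
    · exact fun h => hbc h.symm
    · exact H.irrefl
  · rintro x rfl y rfl; exact H.irrefl
  · rintro x (rfl | rfl | rfl) y rfl
    · exact had
    · exact hbd
    · exact hcd
  · ext x; simp; tauto

lemma exists_biclique_ext [Fintype V] {S : Set V} (hS : IsCompleteBipartiteSet H S) :
    ∃ T, IsBiclique H T ∧ S ⊆ T := by
  obtain ⟨T, hT, hmax⟩ := Set.Finite.exists_maximalFor id
    {T | IsCompleteBipartiteSet H T ∧ S ⊆ T} (Set.toFinite _) ⟨S, hS, subset_rfl⟩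
  exact ⟨T, ⟨hT.1, fun T' hT' hsub => hsub.antisymm (hmax ⟨hT', hT.2.trans hsub⟩ hsub)⟩, hT.2⟩

end BicliqueAux

namespace BicliqueAux

lemma three_distinct_le {α : Type*} {T : Set α} (hfin : T.Finite)
    {X Y Z : α} (hX : X ∈ T) (hY : Y ∈ T) (hZ : Z ∈ T)
    (hXY : X ≠ Y) (hXZ : X ≠ Z) (hYZ : Y ≠ Z) : 3 ≤ T.ncard := by
  have hsub : {X, Y, Z} ⊆ T := by
    intro x hx
    rcases hx with rfl | rfl | rfl <;> assumption
  have h3 : ({X, Y, Z} : Set α).ncard = 3 := by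
    rw [Set.ncard_insert_of_notMem (by simp [hXY, hXZ]) (Set.toFinite _),
      Set.ncard_insert_of_notMem (by simp [hYZ]) (Set.toFinite _),
      Set.ncard_singleton]
  calc 3 = ({X, Y, Z} : Set α).ncard := h3.symm
    _ ≤ T.ncard := Set.ncard_le_ncard hsub hfin

lemma closed_eq_univ {H : SimpleGraph V} (hconn : H.Connected) (C : Set V)
    (hne : C.Nonempty) (hcl : ∀ x ∈ C, ∀ y, H.Adj x y → y ∈ C) :
    ∀ y, y ∈ C := by
  obtain ⟨x0, hx0⟩ := hne
  have key : ∀ (x y : V), x ∈ C → H.Walk x y → y ∈ C := by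
    intro x y hx w
    induction w with
    | nil => exact hx
    | cons h p ih => exact ih (hcl _ hx _ h)
  intro y
  obtain ⟨w⟩ := hconn.preconnected x0 y
  exact key x0 y hx0 w

lemma card_le_six {W : Type*} [Fintype W] {x1 x2 x3 x4 x5 x6 : W}
    (h : ∀ y : W, y ∈ ({x1, x2, x3, x4, x5, x6} : Set W)) : Fintype.card W ≤ 6 := by
  have h1 : (Set.univ : Set W) ⊆ {x1, x2, x3, x4, x5, x6} := fun y _ => h y
  have h2 : (Set.univ : Set W).ncard ≤ ({x1, x2, x3, x4, x5, x6} : Set W).ncard :=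
    Set.ncard_le_ncard h1 (Set.toFinite _)
  have h3 : ({x1, x2, x3, x4, x5, x6} : Set W).ncard ≤ 6 := by
    apply le_trans (Set.ncard_insert_le _ _)
    have := Set.ncard_insert_le x2 ({x3, x4, x5, x6} : Set W)
    apply Nat.succ_le_succ
    apply le_trans (Set.ncard_insert_le _ _)
    apply Nat.succ_le_succ
    apply le_trans (Set.ncard_insert_le _ _)
    apply Nat.succ_le_succ
    apply le_trans (Set.ncard_insert_le _ _)
    apply Nat.succ_le_succ
    apply le_trans (Set.ncard_insert_le _ _)
    apply Nat.succ_le_succ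
    simp
  have h4 : (Set.univ : Set W).ncard = Fintype.card W := by
    rw [Set.ncard_univ, Nat.card_eq_fintype_card]
  omega

end BicliqueAux

namespace BicliqueAux

def SSet (H : SimpleGraph V) (B : Set V) : Set (Set V) :=
  {S | IsBiclique H S ∧ S ≠ B ∧ (S ∩ B).Nonempty}

structure Ctx (V : Type) [Fintype V] where
  H : SimpleGraph V
  B : Set V
  B1 : Set V
  B2 : Set V
  hconn : H.Connected
  htwin : ∀ v w : V, v ≠ w → H.neighborSet v ≠ H.neighborSet w
  hcard : 7 ≤ Fintype.card V
  hB : IsBiclique H B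
  hpart : IsCBP H B1 B2
  hunion : B1 ∪ B2 = B
  hS2 : (SSet H B).ncard ≤ 2

namespace Ctx

variable [Fintype V] (c : Ctx V)

def swap : Ctx V where
  H := c.H; B := c.B; B1 := c.B2; B2 := c.B1
  hconn := c.hconn; htwin := c.htwin; hcard := c.hcard; hB := c.hB
  hpart := by
    obtain ⟨h1, h2, h3, h4, h5, h6⟩ := c.hpart
    exact ⟨h2, h1, h3.symm, h5, h4, fun a ha b hb => (h6 b hb a ha).symm⟩
  hunion := by rw [Set.union_comm]; exact c.hunion
  hS2 := c.hS2

lemma mem1 {x : V} (hx : x ∈ c.B1) : x ∈ c.B := c.hunion ▸ Set.mem_union_left _ hx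
lemma mem2 {x : V} (hx : x ∈ c.B2) : x ∈ c.B := c.hunion ▸ Set.mem_union_right _ hx

lemma adj12 {x y : V} (hx : x ∈ c.B1) (hy : y ∈ c.B2) : c.H.Adj x y :=
  c.hpart.2.2.2.2.2 x hx y hy

lemma nadj1 {x y : V} (hx : x ∈ c.B1) (hy : y ∈ c.B1) : ¬c.H.Adj x y :=
  c.hpart.2.2.2.1 x hx y hy

lemma nadj2 {x y : V} (hx : x ∈ c.B2) (hy : y ∈ c.B2) : ¬c.H.Adj x y :=
  c.hpart.2.2.2.2.1 x hx y hy

lemma mem2_of_adj {x z : V} (hx : x ∈ c.B1) (hz : z ∈ c.B) (hadj : c.H.Adj x z) :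
    z ∈ c.B2 := by
  have := c.hunion ▸ hz
  rcases (Set.mem_union _ _ _).1 this with h | h
  · exact absurd hadj (c.nadj1 hx h)
  · exact h

/-- every vertex of B is in B1 or B2 -/
lemma mem_cases {z : V} (hz : z ∈ c.B) : z ∈ c.B1 ∨ z ∈ c.B2 :=
  (Set.mem_union _ _ _).1 (c.hunion ▸ hz)

/-- vertices with equal neighbourhoods are equal -/
lemma vtx_eq {x y : V} (h : ∀ z, c.H.Adj x z ↔ c.H.Adj y z) : x = y := by
  by_contra hne
  exact c.htwin x y hne (Set.ext fun z => by
    simp only [SimpleGraph.mem_neighborSet]; exact h z)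

/-- separation: distinct vertices of B1 have an external distinguishing vertex -/
lemma sep {x y : V} (hx : x ∈ c.B1) (hy : y ∈ c.B1) (hne : x ≠ y) :
    ∃ w, w ∉ c.B ∧ ((c.H.Adj x w ∧ ¬c.H.Adj y w) ∨ (c.H.Adj y w ∧ ¬c.H.Adj x w)) := by
  by_contra hcon
  push_neg at hcon
  apply hne
  apply c.vtx_eq
  intro z
  by_cases hzB : z ∈ c.B
  · constructor
    · intro h; exact c.adj12 hy (c.mem2_of_adj hx hzB h)
    · intro h; exact c.adj12 hx (c.mem2_of_adj hy hzB h)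
  · exact ⟨(hcon z hzB).1, (hcon z hzB).2⟩
  
/-- maximality of B -/
lemma maxB {w : V} (hw : w ∉ c.B) (hadj : ∀ b ∈ c.B2, c.H.Adj w b) :
    ∃ a ∈ c.B1, c.H.Adj w a := by
  by_contra hcon
  push_neg at hcon
  have hcbp : IsCompleteBipartiteSet c.H (c.B1 ∪ {w} ∪ c.B2) := by
    obtain ⟨h1, h2, h3, h4, h5, h6⟩ := c.hpart
    refine ⟨c.B1 ∪ {w}, c.B2, ⟨h1.mono Set.subset_union_left, h2, ?_, ?_, h5, ?_⟩, rfl⟩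
    · rw [Set.disjoint_union_left]
      refine ⟨h3, ?_⟩
      rw [Set.disjoint_left]
      rintro x rfl hx
      exact hw (c.mem2 hx)
    · rintro a (ha | rfl) b (hb | rfl)
      · exact h4 a ha b hb
      · exact fun h => hcon a ha h.symm
      · exact fun h => hcon b hb h
      · exact c.H.irrefl
    · rintro a (ha | rfl) b hb
      · exact h6 a ha b hb
      · exact hadj b hb
  have hsub : c.B ⊆ c.B1 ∪ {w} ∪ c.B2 := by
    rw [← c.hunion]
    intro x hx
    rcases hx with h | h
    · exact Or.inl (Or.inl h)
    · exact Or.inr h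
  have := c.hB.2 _ hcbp hsub
  apply hw
  rw [this]
  exact Or.inl (Or.inr rfl)

lemma extS {S : Set V} (hS : IsCompleteBipartiteSet c.H S) {p q : V}
    (hp : p ∈ S) (hpB : p ∈ c.B) (hq : q ∈ S) (hqB : q ∉ c.B) :
    ∃ X ∈ SSet c.H c.B, S ⊆ X := by
  obtain ⟨T, hT, hsub⟩ := exists_biclique_ext hS
  refine ⟨T, ⟨hT, ?_, p, hsub hp, hpB⟩, hsub⟩
  rintro rfl
  exact hqB (hsub hq)

lemma pigeon {X Y Z : Set V} (hX : X ∈ SSet c.H c.B) (hY : Y ∈ SSet c.H c.B)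
    (hZ : Z ∈ SSet c.H c.B) (hXY : X ≠ Y) : Z = X ∨ Z = Y := by
  by_contra hcon
  push_neg at hcon
  have := three_distinct_le (Set.toFinite _) hX hY hZ hXY
    (Ne.symm hcon.1) (Ne.symm hcon.2)
  have h2 := c.hS2
  omega

end Ctx

end BicliqueAux

namespace BicliqueAux

/-- `E(x) ⊄ E(y)`: some external neighbour of `x` is not one of `y`. -/
def NSub [Fintype V] (C : Ctx V) (x y : V) : Prop :=
  ∃ w, w ∉ C.B ∧ C.H.Adj x w ∧ ¬C.H.Adj y w

/-- `E(x) ⊆ E(y)`. -/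
def Sub [Fintype V] (C : Ctx V) (x y : V) : Prop :=
  ∀ w, w ∉ C.B → C.H.Adj x w → C.H.Adj y w

lemma nsub_of_not_sub [Fintype V] {C : Ctx V} {x y : V} (h : ¬Sub C x y) : NSub C x y := by
  unfold Sub at h
  push_neg at h
  obtain ⟨w, h1, h2, h3⟩ := h
  exact ⟨w, h1, h2, h3⟩

namespace Ctx

variable [Fintype V] (C : Ctx V)

lemma excl {X : Set V} (hX : X ∈ SSet C.H C.B) {p q z : V} (hp : p ∈ X) (hq : q ∈ X)
    (hpq : C.H.Adj p q) (h1 : ¬C.H.Adj z p) (h2 : ¬C.H.Adj z q) : z ∉ X :=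
  cbp_not_mem hX.1.1 hp hq hpq h1 h2

end Ctx

lemma k13_caseA [Fintype V] (C : Ctx V) {a b c : V}
    (ha : a ∈ C.B1) (hb : b ∈ C.B1) (hc : c ∈ C.B1)
    (sab : NSub C a b) (sba : NSub C b a) (sac : NSub C a c) (sca : NSub C c a)
    (sbc : NSub C b c) (scb : NSub C c b) : False := by
  obtain ⟨u, huB, hau, hbu⟩ := sab
  obtain ⟨v, hvB, hbv, hav⟩ := sba
  obtain ⟨X12, hX12, hs12⟩ := C.extS (cbp_pair hau) (p := a) (by simp) (C.mem1 ha)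
    (q := u) (by simp) huB
  obtain ⟨X21, hX21, hs21⟩ := C.extS (cbp_pair hbv) (p := b) (by simp) (C.mem1 hb)
    (q := v) (by simp) hvB
  have haX12 : a ∈ X12 := hs12 (by simp)
  have huX12 : u ∈ X12 := hs12 (by simp)
  have hbX21 : b ∈ X21 := hs21 (by simp)
  have hvX21 : v ∈ X21 := hs21 (by simp)
  have hbn12 : b ∉ X12 := C.excl hX12 haX12 huX12 hau (C.nadj1 hb ha) hbu
  have han21 : a ∉ X21 := C.excl hX21 hbX21 hvX21 hbv (C.nadj1 ha hb) hav
  have hne : X12 ≠ X21 := fun h => han21 (h ▸ haX12)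
  -- X13
  obtain ⟨w, hwB, haw, hcw⟩ := sac
  obtain ⟨X13, hX13, hs13⟩ := C.extS (cbp_pair haw) (p := a) (by simp) (C.mem1 ha)
    (q := w) (by simp) hwB
  have haX13 : a ∈ X13 := hs13 (by simp)
  have hwX13 : w ∈ X13 := hs13 (by simp)
  have hcn13 : c ∉ X13 := C.excl hX13 haX13 hwX13 haw (C.nadj1 hc ha) hcw
  have h13 : X13 = X12 := by
    rcases C.pigeon hX12 hX21 hX13 hne with h | h
    · exact h
    · exact absurd (h ▸ haX13) han21
  have hcn12 : c ∉ X12 := h13 ▸ hcn13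
  -- X31
  obtain ⟨w', hw'B, hcw', haw'⟩ := sca
  obtain ⟨X31, hX31, hs31⟩ := C.extS (cbp_pair hcw') (p := c) (by simp) (C.mem1 hc)
    (q := w') (by simp) hw'B
  have hcX31 : c ∈ X31 := hs31 (by simp)
  have hw'X31 : w' ∈ X31 := hs31 (by simp)
  have h31 : X31 = X21 := by
    rcases C.pigeon hX12 hX21 hX31 hne with h | h
    · exact absurd (h ▸ hcX31) hcn12
    · exact h
  have hcX21 : c ∈ X21 := h31 ▸ hcX31
  -- X23
  obtain ⟨t, htB, hbt, hct⟩ := sbc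
  obtain ⟨X23, hX23, hs23⟩ := C.extS (cbp_pair hbt) (p := b) (by simp) (C.mem1 hb)
    (q := t) (by simp) htB
  have hbX23 : b ∈ X23 := hs23 (by simp)
  have htX23 : t ∈ X23 := hs23 (by simp)
  have hcn23 : c ∉ X23 := C.excl hX23 hbX23 htX23 hbt (C.nadj1 hc hb) hct
  rcases C.pigeon hX12 hX21 hX23 hne with h | h
  · exact hbn12 (h ▸ hbX23)
  · exact hcn23 (h ▸ hcX21)

end BicliqueAux

namespace BicliqueAux

/-- single containment, third incomparable to both:  Eb⊄Ea (a⊊b), c ∥ a, c ∥ b -/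
lemma k13_caseB4 [Fintype V] (C : Ctx V) {a b c : V}
    (ha : a ∈ C.B1) (hb : b ∈ C.B1) (hc : c ∈ C.B1)
    (sba : NSub C b a) (sac : NSub C a c) (sca : NSub C c a)
    (sbc : NSub C b c) (scb : NSub C c b) : False := by
  -- Xac ∋ a, ∌ c ; Xca ∋ c, ∌ a
  obtain ⟨w1, hw1B, haw1, hcw1⟩ := sac
  obtain ⟨w2, hw2B, hcw2, haw2⟩ := sca
  obtain ⟨Xac, hXac, hs1⟩ := C.extS (cbp_pair haw1) (p := a) (by simp) (C.mem1 ha)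
    (q := w1) (by simp) hw1B
  obtain ⟨Xca, hXca, hs2⟩ := C.extS (cbp_pair hcw2) (p := c) (by simp) (C.mem1 hc)
    (q := w2) (by simp) hw2B
  have haXac : a ∈ Xac := hs1 (by simp)
  have hcXca : c ∈ Xca := hs2 (by simp)
  have hcnac : c ∉ Xac := C.excl hXac haXac (hs1 (by simp)) haw1 (C.nadj1 hc ha) hcw1
  have hanca : a ∉ Xca := C.excl hXca hcXca (hs2 (by simp)) hcw2 (C.nadj1 ha hc) haw2
  have hne : Xac ≠ Xca := fun h => hcnac (h ▸ hcXca)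
  -- Xcb' ∋ c ∌ b, pigeon ⇒ = Xca ⇒ b ∉ Xca
  obtain ⟨w3, hw3B, hcw3, hbw3⟩ := scb
  obtain ⟨Y, hY, hs3⟩ := C.extS (cbp_pair hcw3) (p := c) (by simp) (C.mem1 hc)
    (q := w3) (by simp) hw3B
  have hbnY : b ∉ Y := C.excl hY (hs3 (by simp)) (hs3 (by simp)) hcw3 (C.nadj1 hb hc) hbw3
  have hYca : Y = Xca := by
    rcases C.pigeon hXac hXca hY hne with h | h
    · exact absurd (h ▸ hs3 (Set.mem_insert c {w3})) hcnac
    · exact h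
  have hbnca : b ∉ Xca := hYca ▸ hbnY
  -- Xbc ∋ b ∌ c : ≠ Xca ⇒ = Xac ⇒ b ∈ Xac
  obtain ⟨w4, hw4B, hbw4, hcw4⟩ := sbc
  obtain ⟨Z, hZ, hs4⟩ := C.extS (cbp_pair hbw4) (p := b) (by simp) (C.mem1 hb)
    (q := w4) (by simp) hw4B
  have hbZ : b ∈ Z := hs4 (by simp)
  have hZac : Z = Xac := by
    rcases C.pigeon hXac hXca hZ hne with h | h
    · exact h
    · exact absurd (h ▸ hbZ) hbnca
  have hbXac : b ∈ Xac := hZac ▸ hbZ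
  -- X' ∋ b ∌ a : ≠ Xca (b) ⇒ = Xac, but a ∈ Xac ∖ X' : contradiction
  obtain ⟨w5, hw5B, hbw5, haw5⟩ := sba
  obtain ⟨W, hW, hs5⟩ := C.extS (cbp_pair hbw5) (p := b) (by simp) (C.mem1 hb)
    (q := w5) (by simp) hw5B
  have hbW : b ∈ W := hs5 (by simp)
  have hanW : a ∉ W := C.excl hW hbW (hs5 (by simp)) hbw5 (C.nadj1 ha hb) haw5
  rcases C.pigeon hXac hXca hW hne with h | h
  · exact hanW (h ▸ haXac)
  · exact hbnca (h ▸ hbW)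

/-- max case: Ea ⊆ Ec, Eb ⊆ Ec, Ea ∥ Eb -/
lemma k13_caseB3 [Fintype V] (C : Ctx V) {a b c : V}
    (ha : a ∈ C.B1) (hb : b ∈ C.B1) (hc : c ∈ C.B1)
    (subac : Sub C a c) (subbc : Sub C b c)
    (sab : NSub C a b) (sba : NSub C b a)
    (sca : NSub C c a) (scb : NSub C c b) : False := by
  obtain ⟨w1, hw1B, haw1, hbw1⟩ := sab
  obtain ⟨w2, hw2B, hbw2, haw2⟩ := sba
  obtain ⟨Xab, hXab, hs1⟩ := C.extS (cbp_pair haw1) (p := a) (by simp) (C.mem1 ha)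
    (q := w1) (by simp) hw1B
  obtain ⟨Xba, hXba, hs2⟩ := C.extS (cbp_pair hbw2) (p := b) (by simp) (C.mem1 hb)
    (q := w2) (by simp) hw2B
  have haXab : a ∈ Xab := hs1 (by simp)
  have hbXba : b ∈ Xba := hs2 (by simp)
  have hbnab : b ∉ Xab := C.excl hXab haXab (hs1 (by simp)) haw1 (C.nadj1 hb ha) hbw1
  have hanba : a ∉ Xba := C.excl hXba hbXba (hs2 (by simp)) hbw2 (C.nadj1 ha hb) haw2
  have hne : Xab ≠ Xba := fun h => hbnab (h ▸ hbXba)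
  have hcXba : c ∈ Xba := by
    obtain ⟨w, hwB, hcw, haw⟩ := sca
    obtain ⟨Y, hY, hs⟩ := C.extS (cbp_pair hcw) (p := c) (by simp) (C.mem1 hc)
      (q := w) (by simp) hwB
    have hanY : a ∉ Y := C.excl hY (hs (by simp)) (hs (by simp)) hcw (C.nadj1 ha hc) haw
    rcases C.pigeon hXab hXba hY hne with h | h
    · exact absurd (h ▸ haXab) hanY
    · exact h ▸ hs (by simp)
  have hcXab : c ∈ Xab := by
    obtain ⟨w, hwB, hcw, hbw⟩ := scb
    obtain ⟨Y, hY, hs⟩ := C.extS (cbp_pair hcw) (p := c) (by simp) (C.mem1 hc)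
      (q := w) (by simp) hwB
    have hbnY : b ∉ Y := C.excl hY (hs (by simp)) (hs (by simp)) hcw (C.nadj1 hb hc) hbw
    rcases C.pigeon hXab hXba hY hne with h | h
    · exact h ▸ hs (by simp)
    · exact absurd (h ▸ hbXba) hbnY
  -- Ea ∩ Eb = ∅
  have hdisj : ∀ y, y ∉ C.B → C.H.Adj a y → C.H.Adj b y → False := by
    intro y hyB hay hby
    obtain ⟨Z, hZ, hs⟩ := C.extS (cbp_cherry hay hby (C.nadj1 ha hb)) (p := a) (by simp)
      (C.mem1 ha) (q := y) (by simp) hyB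
    rcases C.pigeon hXab hXba hZ hne with h | h
    · exact hbnab (h ▸ hs (by simp))
    · exact hanba (h ▸ hs (by simp))
  -- key fact: if w ∈ Ec and w ∈ Eb then w ∉ Xab gives contradiction pattern:
  -- members {a, c, w} of Xab with ¬Adj c a and Adj c w give Adj a w.
  set y := w1 with hy
  have hyB := hw1B; have hay := haw1; have hby := hbw1
  set w' := w2 with hw'
  have hw'B := hw2B; have hbw' := hbw2; have haw' := haw2
  have hcy : C.H.Adj c y := subac y hyB hay
  have hcw' : C.H.Adj c w' := subbc w' hw'B hbw'
  have hnotW'ab : w' ∉ Xab := by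
    intro hmem
    exact hdisj w' hw'B
      (cbp_trans hXab.1.1 hcXab haXab hmem (C.nadj1 hc ha) hcw') hbw'
  by_cases hadj : C.H.Adj y w'
  · -- cherry ({a,w'},{y})
    obtain ⟨Z, hZ, hs⟩ := C.extS (cbp_cherry hay hadj.symm
      (fun h => hdisj w' hw'B h hbw')) (p := a) (by simp) (C.mem1 ha)
      (q := y) (by simp [hay.ne']) hyB
    rcases C.pigeon hXab hXba hZ hne with h | h
    · exact hnotW'ab (h ▸ hs (by simp))
    · exact hanba (h ▸ hs (by simp))
  · -- cherry' ({c},{y,w'})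
    obtain ⟨Z, hZ, hs⟩ := C.extS (cbp_cherry' hcy hcw' hadj) (p := c) (by simp)
      (C.mem1 hc) (q := y) (by simp [hcy.ne']) hyB
    rcases C.pigeon hXab hXba hZ hne with h | h
    · exact hnotW'ab (h ▸ hs (by simp))
    · exact hdisj y hyB hay
        (cbp_trans hXba.1.1 hcXba hbXba (h ▸ hs (by simp)) (C.nadj1 hc hb) hcy)

end BicliqueAux

namespace BicliqueAux

/-- min case: Ea ⊆ Eb, Ea ⊆ Ec, Eb ∥ Ec -/
lemma k13_caseB2 [Fintype V] (C : Ctx V) {a b c : V}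
    (ha : a ∈ C.B1) (hb : b ∈ C.B1) (hc : c ∈ C.B1)
    (hnab : a ≠ b) (hnac : a ≠ c)
    (sba : NSub C b a) (sca : NSub C c a)
    (sbc : NSub C b c) (scb : NSub C c b) : False := by
  classical
  obtain ⟨w1, hw1B, hbw1, hcw1⟩ := sbc
  obtain ⟨w2, hw2B, hcw2, hbw2⟩ := scb
  obtain ⟨Xbc, hXbc, hs1⟩ := C.extS (cbp_pair hbw1) (p := b) (by simp) (C.mem1 hb)
    (q := w1) (by simp) hw1B
  obtain ⟨Xcb, hXcb, hs2⟩ := C.extS (cbp_pair hcw2) (p := c) (by simp) (C.mem1 hc)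
    (q := w2) (by simp) hw2B
  have hbXbc : b ∈ Xbc := hs1 (by simp)
  have hw1Xbc : w1 ∈ Xbc := hs1 (by simp)
  have hcXcb : c ∈ Xcb := hs2 (by simp)
  have hw2Xcb : w2 ∈ Xcb := hs2 (by simp)
  have hcnbc : c ∉ Xbc := C.excl hXbc hbXbc hw1Xbc hbw1 (C.nadj1 hc hb) hcw1
  have hbncb : b ∉ Xcb := C.excl hXcb hcXcb hw2Xcb hcw2 (C.nadj1 hb hc) hbw2
  have hne : Xbc ≠ Xcb := fun h => hbncb (h ▸ hbXbc)
  have hanbc : a ∉ Xbc := by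
    obtain ⟨w, hwB, hbw, haw⟩ := sba
    obtain ⟨Y, hY, hs⟩ := C.extS (cbp_pair hbw) (p := b) (by simp) (C.mem1 hb)
      (q := w) (by simp) hwB
    have hanY : a ∉ Y := C.excl hY (hs (by simp)) (hs (by simp)) hbw (C.nadj1 ha hb) haw
    rcases C.pigeon hXbc hXcb hY hne with h | h
    · exact h ▸ hanY
    · exact absurd (h ▸ hs (Set.mem_insert b {w})) hbncb
  have hancb : a ∉ Xcb := by
    obtain ⟨w, hwB, hcw, haw⟩ := sca
    obtain ⟨Y, hY, hs⟩ := C.extS (cbp_pair hcw) (p := c) (by simp) (C.mem1 hc)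
      (q := w) (by simp) hwB
    have hanY : a ∉ Y := C.excl hY (hs (by simp)) (hs (by simp)) hcw (C.nadj1 ha hc) haw
    rcases C.pigeon hXbc hXcb hY hne with h | h
    · exact absurd (h ▸ hs (Set.mem_insert c {w})) hcnbc
    · exact h ▸ hanY
  -- Ea = ∅
  have hEa : ∀ y, y ∉ C.B → ¬C.H.Adj a y := by
    intro y hyB hay
    obtain ⟨Y, hY, hs⟩ := C.extS (cbp_pair hay) (p := a) (by simp) (C.mem1 ha)
      (q := y) (by simp) hyB
    rcases C.pigeon hXbc hXcb hY hne with h | h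
    · exact hanbc (h ▸ hs (by simp))
    · exact hancb (h ▸ hs (by simp))
  -- Eb ∩ Ec = ∅
  have hdisjbc : ∀ y, y ∉ C.B → C.H.Adj b y → C.H.Adj c y → False := by
    intro y hyB hby hcy
    obtain ⟨Z, hZ, hs⟩ := C.extS (cbp_cherry hby hcy (C.nadj1 hb hc)) (p := b) (by simp)
      (C.mem1 hb) (q := y) (by simp) hyB
    rcases C.pigeon hXbc hXcb hZ hne with h | h
    · exact hcnbc (h ▸ hs (by simp))
    · exact hbncb (h ▸ hs (by simp))
  -- every neighbour of a B2 vertex is in B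
  have hEu : ∀ u ∈ C.B2, ∀ z, C.H.Adj u z → z ∈ C.B := by
    intro u hu z huz
    by_contra hzB
    have hanz : ¬C.H.Adj a z := hEa z hzB
    obtain ⟨Z, hZ, hs⟩ := C.extS (cbp_cherry (C.adj12 ha hu) huz.symm hanz) (p := a)
      (by simp) (C.mem1 ha) (q := z) (by simp) hzB
    rcases C.pigeon hXbc hXcb hZ hne with h | h
    · exact hanbc (h ▸ hs (by simp))
    · exact hancb (h ▸ hs (by simp))
  obtain ⟨u, hu⟩ := C.hpart.2.1
  have hDb : ∀ w, w ∉ C.B → C.H.Adj b w → u ∈ Xbc ∧ w ∈ Xbc := by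
    intro w hwB hbw
    have hnuw : ¬C.H.Adj u w := fun h => hwB (hEu u hu w h)
    obtain ⟨Z, hZ, hs⟩ := C.extS (cbp_cherry (C.adj12 hb hu).symm hbw.symm hnuw)
      (p := b) (by simp) (C.mem1 hb) (q := w) (by simp) hwB
    rcases C.pigeon hXbc hXcb hZ hne with h | h
    · exact ⟨h ▸ hs (by simp), h ▸ hs (by simp)⟩
    · exact absurd (h ▸ hs (by simp)) hbncb
  have hDc : ∀ w, w ∉ C.B → C.H.Adj c w → u ∈ Xcb ∧ w ∈ Xcb := by
    intro w hwB hcw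
    have hnuw : ¬C.H.Adj u w := fun h => hwB (hEu u hu w h)
    obtain ⟨Z, hZ, hs⟩ := C.extS (cbp_cherry (C.adj12 hc hu).symm hcw.symm hnuw)
      (p := c) (by simp) (C.mem1 hc) (q := w) (by simp) hwB
    rcases C.pigeon hXbc hXcb hZ hne with h | h
    · exact absurd (h ▸ hs (by simp)) hcnbc
    · exact ⟨h ▸ hs (by simp), h ▸ hs (by simp)⟩
  have huXbc : u ∈ Xbc := (hDb w1 hw1B hbw1).1
  have huXcb : u ∈ Xcb := (hDc w2 hw2B hcw2).1
  have hadjb : ∀ w, w ∈ Xbc → w ∉ C.B → C.H.Adj w b := fun w hw hwB =>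
    cbp_trans hXbc.1.1 huXbc hw hbXbc (fun h => hwB (hEu u hu w h)) (C.adj12 hb hu).symm
  have hadjc : ∀ w, w ∈ Xcb → w ∉ C.B → C.H.Adj w c := fun w hw hwB =>
    cbp_trans hXcb.1.1 huXcb hw hcXcb (fun h => hwB (hEu u hu w h)) (C.adj12 hc hu).symm
  have hExtb : ∀ w, w ∉ C.B → C.H.Adj b w → ∀ y, C.H.Adj w y → y ∈ C.B := by
    intro w hwB hbw y hwy
    by_contra hyB
    by_cases hby : C.H.Adj b y
    · exact cbp_no_triangle hXbc.1.1 hbXbc (hDb w hwB hbw).2 (hDb y hyB hby).2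
        hbw hwy hby
    · obtain ⟨Z, hZ, hs⟩ := C.extS (cbp_cherry hbw hwy.symm hby) (p := b) (by simp)
        (C.mem1 hb) (q := w) (by simp [hbw.ne']) hwB
      rcases C.pigeon hXbc hXcb hZ hne with h | h
      · have hyXbc : y ∈ Xbc := h ▸ hs (by simp)
        have : C.H.Adj y u :=
          cbp_trans hXbc.1.1 hbXbc hyXbc huXbc hby (C.adj12 hb hu)
        exact hyB (hEu u hu y this.symm)
      · exact hbncb (h ▸ hs (by simp))
  have hExtc : ∀ w, w ∉ C.B → C.H.Adj c w → ∀ y, C.H.Adj w y → y ∈ C.B := by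
    intro w hwB hcw y hwy
    by_contra hyB
    by_cases hcy : C.H.Adj c y
    · exact cbp_no_triangle hXcb.1.1 hcXcb (hDc w hwB hcw).2 (hDc y hyB hcy).2
        hcw hwy hcy
    · obtain ⟨Z, hZ, hs⟩ := C.extS (cbp_cherry hcw hwy.symm hcy) (p := c) (by simp)
        (C.mem1 hc) (q := w) (by simp [hcw.ne']) hwB
      rcases C.pigeon hXbc hXcb hZ hne with h | h
      · exact hcnbc (h ▸ hs (by simp))
      · have hyXcb : y ∈ Xcb := h ▸ hs (by simp)
        have : C.H.Adj y u :=
          cbp_trans hXcb.1.1 hcXcb hyXcb huXcb hcy (C.adj12 hc hu)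
        exact hyB (hEu u hu y this.symm)
  by_cases hd : ∃ d ∈ C.B1, d ≠ a ∧ d ≠ b ∧ d ≠ c
  · obtain ⟨d, hd1, hda, hdb, hdc⟩ := hd
    -- a witness w0 ∈ E(d)
    obtain ⟨w0, hw0B, hw0⟩ := C.sep ha hd1 (Ne.symm hda)
    have hw0d : C.H.Adj d w0 := by
      rcases hw0 with ⟨h1, _⟩ | ⟨h1, _⟩
      · exact absurd h1 (hEa w0 hw0B)
      · exact h1
    have hDd : ∀ w, w ∉ C.B → C.H.Adj d w →
        (d ∈ Xbc ∧ w ∈ Xbc) ∨ (d ∈ Xcb ∧ w ∈ Xcb) := by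
      intro w hwB hdw
      have hnuw : ¬C.H.Adj u w := fun h => hwB (hEu u hu w h)
      obtain ⟨Z, hZ, hs⟩ := C.extS (cbp_cherry (C.adj12 hd1 hu).symm hdw.symm hnuw)
        (p := d) (by simp) (C.mem1 hd1) (q := w) (by simp) hwB
      rcases C.pigeon hXbc hXcb hZ hne with h | h
      · exact Or.inl ⟨h ▸ hs (by simp), h ▸ hs (by simp)⟩
      · exact Or.inr ⟨h ▸ hs (by simp), h ▸ hs (by simp)⟩
    have hEbd : d ∈ Xbc → ∀ w, w ∉ C.B → C.H.Adj b w → C.H.Adj d w := by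
      intro hdX w hwB hbw
      exact cbp_trans hXbc.1.1 hbXbc hdX (hDb w hwB hbw).2 (C.nadj1 hb hd1) hbw
    have hEcd : d ∈ Xcb → ∀ w, w ∉ C.B → C.H.Adj c w → C.H.Adj d w := by
      intro hdX w hwB hcw
      exact cbp_trans hXcb.1.1 hcXcb hdX (hDc w hwB hcw).2 (C.nadj1 hc hd1) hcw
    have key : (∀ w, w ∉ C.B → C.H.Adj b w → C.H.Adj d w) ∧
        (∀ w, w ∉ C.B → C.H.Adj c w → C.H.Adj d w) := by
      rcases hDd w0 hw0B hw0d with ⟨hdX, _⟩ | ⟨hdX, _⟩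
      · have h1 := hEbd hdX
        obtain ⟨ws, hwsB, hws⟩ := C.sep hb hd1 hdb.symm
        have hws' : C.H.Adj d ws ∧ ¬C.H.Adj b ws := by
          rcases hws with ⟨h2, h3⟩ | ⟨h2, h3⟩
          · exact absurd (h1 ws hwsB h2) h3
          · exact ⟨h2, h3⟩
        rcases hDd ws hwsB hws'.1 with ⟨_, hwsX⟩ | ⟨hdX2, _⟩
        · exact absurd (hadjb ws hwsX hwsB) (fun h => hws'.2 h.symm)
        · exact ⟨h1, hEcd hdX2⟩
      · have h1 := hEcd hdX
        obtain ⟨ws, hwsB, hws⟩ := C.sep hc hd1 hdc.symm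
        have hws' : C.H.Adj d ws ∧ ¬C.H.Adj c ws := by
          rcases hws with ⟨h2, h3⟩ | ⟨h2, h3⟩
          · exact absurd (h1 ws hwsB h2) h3
          · exact ⟨h2, h3⟩
        rcases hDd ws hwsB hws'.1 with ⟨hdX2, _⟩ | ⟨_, hwsX⟩
        · exact ⟨hEbd hdX2, h1⟩
        · exact absurd (hadjc ws hwsX hwsB) (fun h => hws'.2 h.symm)
    obtain ⟨hEbd', hEcd'⟩ := key
    have hdw1 : C.H.Adj d w1 := hEbd' w1 hw1B hbw1
    have hdw2 : C.H.Adj d w2 := hEcd' w2 hw2B hcw2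
    have hw2nXbc : w2 ∉ Xbc := fun h => hbw2 (hadjb w2 h hw2B).symm
    have hw1nXcb : w1 ∉ Xcb := fun h => hcw1 (hadjc w1 h hw1B).symm
    by_cases hadj : C.H.Adj w1 w2
    · obtain ⟨Z, hZ, hs⟩ := C.extS (cbp_cherry hbw1 hadj.symm hbw2) (p := b) (by simp)
        (C.mem1 hb) (q := w1) (by simp [hbw1.ne']) hw1B
      rcases C.pigeon hXbc hXcb hZ hne with h | h
      · exact hw2nXbc (h ▸ hs (by simp))
      · exact hbncb (h ▸ hs (by simp))
    · obtain ⟨Z, hZ, hs⟩ := C.extS (cbp_cherry' hdw1 hdw2 hadj) (p := d) (by simp)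
        (C.mem1 hd1) (q := w1) (by simp [hdw1.ne']) hw1B
      rcases C.pigeon hXbc hXcb hZ hne with h | h
      · exact hw2nXbc (h ▸ hs (by simp))
      · exact hw1nXcb (h ▸ hs (by simp))
  · -- B1 ⊆ {a, b, c} : counting contradiction
    push_neg at hd
    have hB1sub : ∀ z ∈ C.B1, z = a ∨ z = b ∨ z = c := by
      intro z hz
      by_cases h1 : z = a
      · exact Or.inl h1
      by_cases h2 : z = b
      · exact Or.inr (Or.inl h2)
      · exact Or.inr (Or.inr (hd z hz h1 h2))
    have hu_eq : ∀ z ∈ C.B2, z = u := by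
      intro z hz
      by_contra hne'
      apply C.htwin z u hne'
      ext t
      simp only [SimpleGraph.mem_neighborSet]
      constructor
      · intro h
        have htB := hEu z hz t h
        rcases C.mem_cases htB with h1 | h1
        · exact C.adj12 h1 hu |>.symm
        · exact absurd h (C.nadj2 hz h1)
      · intro h
        have htB := hEu u hu t h
        rcases C.mem_cases htB with h1 | h1
        · exact C.adj12 h1 hz |>.symm
        · exact absurd h (C.nadj2 hu h1)
    have hNwb : ∀ w, w ∉ C.B → C.H.Adj b w → ∀ z, C.H.Adj w z → z = b := by
      intro w hwB hbw z hwz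
      have hzB := hExtb w hwB hbw z hwz
      rcases C.mem_cases hzB with h1 | h1
      · rcases hB1sub z h1 with rfl | rfl | rfl
        · exact absurd hwz.symm (hEa w hwB)
        · rfl
        · exact absurd hwz.symm (fun h => hdisjbc w hwB hbw h)
      · exact absurd (hEu z h1 w hwz.symm) hwB
    have hNwc : ∀ w, w ∉ C.B → C.H.Adj c w → ∀ z, C.H.Adj w z → z = c := by
      intro w hwB hcw z hwz
      have hzB := hExtc w hwB hcw z hwz
      rcases C.mem_cases hzB with h1 | h1
      · rcases hB1sub z h1 with rfl | rfl | rfl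
        · exact absurd hwz.symm (hEa w hwB)
        · exact absurd hwz.symm (fun h => hdisjbc w hwB h hcw)
        · rfl
      · exact absurd (hEu z h1 w hwz.symm) hwB
    have hEbone : ∀ w, w ∉ C.B → C.H.Adj b w → w = w1 := by
      intro w hwB hbw
      apply C.vtx_eq
      intro z
      constructor
      · intro h
        have := hNwb w hwB hbw z h
        subst this; exact hbw1.symm
      · intro h
        have := hNwb w1 hw1B hbw1 z h
        subst this; exact hbw.symm
    have hEcone : ∀ w, w ∉ C.B → C.H.Adj c w → w = w2 := by
      intro w hwB hcw
      apply C.vtx_eq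
      intro z
      constructor
      · intro h
        have := hNwc w hwB hcw z h
        subst this; exact hcw2.symm
      · intro h
        have := hNwc w2 hw2B hcw2 z h
        subst this; exact hcw.symm
    have hclosed : ∀ x ∈ ({a, b, c, u, w1, w2} : Set V), ∀ y, C.H.Adj x y →
        y ∈ ({a, b, c, u, w1, w2} : Set V) := by
      intro x hx y hxy
      simp only [Set.mem_insert_iff, Set.mem_singleton_iff] at hx
      have hmem : ∀ t, t ∈ C.B → t ∈ ({a, b, c, u, w1, w2} : Set V) := by
        intro t ht
        rcases C.mem_cases ht with h1 | h1
        · rcases hB1sub t h1 with rfl | rfl | rfl <;> simp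
        · have := hu_eq t h1; subst this; simp
      rcases hx with rfl | rfl | rfl | rfl | rfl | rfl
      · by_cases hyB : y ∈ C.B
        · exact hmem y hyB
        · exact absurd hxy (hEa y hyB)
      · by_cases hyB : y ∈ C.B
        · exact hmem y hyB
        · have := hEbone y hyB hxy; subst this; simp
      · by_cases hyB : y ∈ C.B
        · exact hmem y hyB
        · have := hEcone y hyB hxy; subst this; simp
      · exact hmem y (hEu x hu y hxy)
      · have := hNwb x hw1B hbw1 y hxy; subst this; simp
      · have := hNwc x hw2B hcw2 y hxy; subst this; simp
    have hall := closed_eq_univ C.hconn ({a, b, c, u, w1, w2} : Set V)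
      ⟨a, by simp⟩ hclosed
    exact absurd (card_le_six hall) (by have := C.hcard; omega)

end BicliqueAux

namespace BicliqueAux

/-- chain case: Ea ⊆ Eb ⊆ Ec (all distinct) -/
lemma k13_caseB1 [Fintype V] (C : Ctx V) {a b c : V}
    (ha : a ∈ C.B1) (hb : b ∈ C.B1) (hc : c ∈ C.B1)
    (hnab : a ≠ b) (hnac : a ≠ c) (hnbc : b ≠ c)
    (subab : Sub C a b) (subbc : Sub C b c)
    (sba : NSub C b a) (scb : NSub C c b) : False := by
  classical
  obtain ⟨wb, hwbB, hbwb, hawb⟩ := sba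
  obtain ⟨wc, hwcB, hcwc, hbwc⟩ := scb
  have hawc : ¬C.H.Adj a wc := fun h => hbwc (subab wc hwcB h)
  obtain ⟨X1, hX1, hs1⟩ := C.extS (cbp_pair hbwb) (p := b) (by simp) (C.mem1 hb)
    (q := wb) (by simp) hwbB
  obtain ⟨X2, hX2, hs2⟩ := C.extS (cbp_pair hcwc) (p := c) (by simp) (C.mem1 hc)
    (q := wc) (by simp) hwcB
  have hbX1 : b ∈ X1 := hs1 (by simp)
  have hwbX1 : wb ∈ X1 := hs1 (by simp)
  have hcX2 : c ∈ X2 := hs2 (by simp)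
  have hwcX2 : wc ∈ X2 := hs2 (by simp)
  have hanX1 : a ∉ X1 := C.excl hX1 hbX1 hwbX1 hbwb (C.nadj1 ha hb) hawb
  have hbnX2 : b ∉ X2 := C.excl hX2 hcX2 hwcX2 hcwc (C.nadj1 hb hc) hbwc
  have hanX2 : a ∉ X2 := C.excl hX2 hcX2 hwcX2 hcwc (C.nadj1 ha hc) hawc
  have hne : X1 ≠ X2 := fun h => hbnX2 (h ▸ hbX1)
  -- Ea = ∅
  have hEa : ∀ y, y ∉ C.B → ¬C.H.Adj a y := by
    intro y hyB hay
    obtain ⟨Y, hY, hs⟩ := C.extS (cbp_pair hay) (p := a) (by simp) (C.mem1 ha)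
      (q := y) (by simp) hyB
    rcases C.pigeon hX1 hX2 hY hne with h | h
    · exact hanX1 (h ▸ hs (by simp))
    · exact hanX2 (h ▸ hs (by simp))
  -- every neighbour of a B2 vertex is in B
  have hEu : ∀ u ∈ C.B2, ∀ z, C.H.Adj u z → z ∈ C.B := by
    intro u hu z huz
    by_contra hzB
    obtain ⟨Z, hZ, hs⟩ := C.extS (cbp_cherry (C.adj12 ha hu) huz.symm (hEa z hzB))
      (p := a) (by simp) (C.mem1 ha) (q := z) (by simp) hzB
    rcases C.pigeon hX1 hX2 hZ hne with h | h
    · exact hanX1 (h ▸ hs (by simp))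
    · exact hanX2 (h ▸ hs (by simp))
  obtain ⟨u, hu⟩ := C.hpart.2.1
  have hDb : ∀ w, w ∉ C.B → C.H.Adj b w → u ∈ X1 ∧ w ∈ X1 := by
    intro w hwB hbw
    have hnuw : ¬C.H.Adj u w := fun h => hwB (hEu u hu w h)
    obtain ⟨Z, hZ, hs⟩ := C.extS (cbp_cherry (C.adj12 hb hu).symm hbw.symm hnuw)
      (p := b) (by simp) (C.mem1 hb) (q := w) (by simp) hwB
    rcases C.pigeon hX1 hX2 hZ hne with h | h
    · exact ⟨h ▸ hs (by simp), h ▸ hs (by simp)⟩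
    · exact absurd (h ▸ hs (by simp)) hbnX2
  have huX1 : u ∈ X1 := (hDb wb hwbB hbwb).1
  have hadjX1 : ∀ w, w ∈ X1 → w ∉ C.B → C.H.Adj w b := fun w hw hwB =>
    cbp_trans hX1.1.1 huX1 hw hbX1 (fun h => hwB (hEu u hu w h)) (C.adj12 hb hu).symm
  have hwcnX1 : wc ∉ X1 := fun h => hbwc (hadjX1 wc h hwcB).symm
  by_cases hcX1 : c ∈ X1
  · -- main branch
    have hDc' : ∀ w, w ∉ C.B → C.H.Adj c w → w ∈ X1 ∨ (u ∈ X2 ∧ w ∈ X2) := by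
      intro w hwB hcw
      have hnuw : ¬C.H.Adj u w := fun h => hwB (hEu u hu w h)
      obtain ⟨Z, hZ, hs⟩ := C.extS (cbp_cherry (C.adj12 hc hu).symm hcw.symm hnuw)
        (p := c) (by simp) (C.mem1 hc) (q := w) (by simp) hwB
      rcases C.pigeon hX1 hX2 hZ hne with h | h
      · exact Or.inl (h ▸ hs (by simp))
      · exact Or.inr ⟨h ▸ hs (by simp), h ▸ hs (by simp)⟩
    have hX2mem : ∀ w, w ∉ C.B → C.H.Adj c w → ¬C.H.Adj b w → u ∈ X2 ∧ w ∈ X2 := by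
      intro w hwB hcw hbw
      rcases hDc' w hwB hcw with h | h
      · exact absurd (hadjX1 w h hwB).symm hbw
      · exact h
    obtain ⟨huX2, _⟩ := hX2mem wc hwcB hcwc hbwc
    have hadjX2 : ∀ w, w ∈ X2 → w ∉ C.B → C.H.Adj w c := fun w hw hwB =>
      cbp_trans hX2.1.1 huX2 hw hcX2 (fun h => hwB (hEu u hu w h)) (C.adj12 hc hu).symm
    have hnoedge : ∀ y, y ∉ C.B → C.H.Adj b y → ∀ w', w' ∉ C.B → C.H.Adj c w' →
        ¬C.H.Adj b w' → ¬C.H.Adj y w' := by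
      intro y hyB hby w' hw'B hcw' hbw' hyw'
      obtain ⟨Z, hZ, hs⟩ := C.extS (cbp_cherry hby hyw'.symm hbw') (p := b) (by simp)
        (C.mem1 hb) (q := y) (by simp [hby.ne']) hyB
      rcases C.pigeon hX1 hX2 hZ hne with h | h
      · exact hbw' ((hadjX1 w' (h ▸ hs (by simp)) hw'B).symm)
      · exact hbnX2 (h ▸ hs (by simp))
    -- external neighbours of Eb-vertices are in B
    have hNb : ∀ w, w ∉ C.B → C.H.Adj b w → ∀ y, C.H.Adj w y → y ∈ C.B := by
      intro w hwB hbw y hwy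
      by_contra hyB
      by_cases hby : C.H.Adj b y
      · exact cbp_no_triangle hX1.1.1 hbX1 (hDb w hwB hbw).2 (hDb y hyB hby).2
          hbw hwy hby
      · obtain ⟨Z, hZ, hs⟩ := C.extS (cbp_cherry hbw hwy.symm hby) (p := b) (by simp)
          (C.mem1 hb) (q := w) (by simp [hbw.ne']) hwB
        rcases C.pigeon hX1 hX2 hZ hne with h | h
        · have hyX1 : y ∈ X1 := h ▸ hs (by simp)
          have : C.H.Adj y u := cbp_trans hX1.1.1 hbX1 hyX1 huX1 hby (C.adj12 hb hu)
          exact hyB (hEu u hu y this.symm)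
        · exact hbnX2 (h ▸ hs (by simp))
    -- external neighbours of (Ec ∖ Eb)-vertices are in B
    have hNc : ∀ w', w' ∉ C.B → C.H.Adj c w' → ¬C.H.Adj b w' →
        ∀ y, C.H.Adj w' y → y ∈ C.B := by
      intro w' hw'B hcw' hbw' y hw'y
      by_contra hyB
      by_cases hcy : C.H.Adj c y
      · by_cases hby : C.H.Adj b y
        · exact hnoedge y hyB hby w' hw'B hcw' hbw' (hw'y.symm) |>.elim
        · exact cbp_no_triangle hX2.1.1 hcX2 (hX2mem y hyB hcy hby).2
            (hX2mem w' hw'B hcw' hbw').2 hcy (hw'y.symm) hcw'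
      · obtain ⟨Z, hZ, hs⟩ := C.extS (cbp_cherry hcw' hw'y.symm hcy) (p := c) (by simp)
          (C.mem1 hc) (q := w') (by simp [hcw'.ne']) hw'B
        rcases C.pigeon hX1 hX2 hZ hne with h | h
        · exact hbw' (hadjX1 w' (h ▸ hs (by simp)) hw'B).symm
        · have hyX2 : y ∈ X2 := h ▸ hs (by simp)
          have : C.H.Adj y u := cbp_trans hX2.1.1 hcX2 hyX2 huX2 hcy (C.adj12 hc hu)
          exact hyB (hEu u hu y this.symm)
    by_cases hd : ∃ d ∈ C.B1, d ≠ a ∧ d ≠ b ∧ d ≠ c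
    · obtain ⟨d, hd1, hda, hdb, hdc⟩ := hd
      obtain ⟨w0, hw0B, hw0⟩ := C.sep ha hd1 (Ne.symm hda)
      have hw0d : C.H.Adj d w0 := by
        rcases hw0 with ⟨h1, _⟩ | ⟨h1, _⟩
        · exact absurd h1 (hEa w0 hw0B)
        · exact h1
      have hDd : ∀ w, w ∉ C.B → C.H.Adj d w →
          (d ∈ X1 ∧ w ∈ X1) ∨ (d ∈ X2 ∧ w ∈ X2) := by
        intro w hwB hdw
        have hnuw : ¬C.H.Adj u w := fun h => hwB (hEu u hu w h)
        obtain ⟨Z, hZ, hs⟩ := C.extS (cbp_cherry (C.adj12 hd1 hu).symm hdw.symm hnuw)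
          (p := d) (by simp) (C.mem1 hd1) (q := w) (by simp) hwB
        rcases C.pigeon hX1 hX2 hZ hne with h | h
        · exact Or.inl ⟨h ▸ hs (by simp), h ▸ hs (by simp)⟩
        · exact Or.inr ⟨h ▸ hs (by simp), h ▸ hs (by simp)⟩
      have hEbd : d ∈ X1 → ∀ w, w ∉ C.B → C.H.Adj b w → C.H.Adj d w := by
        intro hdX w hwB hbw
        exact cbp_trans hX1.1.1 hbX1 hdX (hDb w hwB hbw).2 (C.nadj1 hb hd1) hbw
      have hEcd : d ∈ X2 → ∀ w, w ∉ C.B → C.H.Adj c w → ¬C.H.Adj b w →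
          C.H.Adj d w := by
        intro hdX w hwB hcw hbw
        exact cbp_trans hX2.1.1 hcX2 hdX (hX2mem w hwB hcw hbw).2 (C.nadj1 hc hd1) hcw
      -- E(d) ⊆ Ec
      have hEdc : ∀ w, w ∉ C.B → C.H.Adj d w → C.H.Adj c w := by
        intro w hwB hdw
        rcases hDd w hwB hdw with ⟨_, hwX⟩ | ⟨_, hwX⟩
        · exact subbc w hwB (hadjX1 w hwX hwB).symm
        · exact (hadjX2 w hwX hwB).symm
      -- twins contradiction once Ec ⊆ E(d)
      have twin_dc : (∀ z, z ∉ C.B → C.H.Adj c z → C.H.Adj d z) → False := by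
        intro hsub
        apply hdc
        apply C.vtx_eq
        intro z
        by_cases hzB : z ∈ C.B
        · rcases C.mem_cases hzB with h1 | h1
          · exact ⟨fun h => absurd h (C.nadj1 hd1 h1), fun h => absurd h (C.nadj1 hc h1)⟩
          · exact ⟨fun _ => C.adj12 hc h1, fun _ => C.adj12 hd1 h1⟩
        · exact ⟨fun h => hEdc z hzB h, fun h => hsub z hzB h⟩
      have hEcsubEd : d ∈ X1 → False := by
        intro hdX1
        have h1 := hEbd hdX1
        obtain ⟨ws, hwsB, hws⟩ := C.sep hb hd1 (Ne.symm hdb)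
        have hws' : C.H.Adj d ws ∧ ¬C.H.Adj b ws := by
          rcases hws with ⟨h2, h3⟩ | ⟨h2, h3⟩
          · exact absurd (h1 ws hwsB h2) h3
          · exact ⟨h2, h3⟩
        rcases hDd ws hwsB hws'.1 with ⟨_, hwsX⟩ | ⟨hdX2, _⟩
        · exact hws'.2 (hadjX1 ws hwsX hwsB).symm
        · -- Eb ⊆ E(d) and Ec ∖ Eb ⊆ E(d), so Ec ⊆ E(d)
          apply twin_dc
          intro z hzB hcz
          by_cases hbz : C.H.Adj b z
          · exact h1 z hzB hbz
          · exact hEcd hdX2 z hzB hcz hbz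
      rcases hDd w0 hw0B hw0d with ⟨hdX1, _⟩ | ⟨hdX2, _⟩
      · exact hEcsubEd hdX1
      · -- d ∈ X2
        by_cases hint : ∃ w, w ∉ C.B ∧ C.H.Adj b w ∧ C.H.Adj d w
        · obtain ⟨w, hwB, hbw, hdw⟩ := hint
          obtain ⟨Z, hZ, hs⟩ := C.extS (cbp_cherry hbw hdw
            (C.nadj1 hb hd1)) (p := b) (by simp) (C.mem1 hb) (q := w)
            (by simp [hbw.ne']) hwB
          rcases C.pigeon hX1 hX2 hZ hne with h | h
          · exact hEcsubEd (h ▸ hs (by simp))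
          · exact hbnX2 (h ▸ hs (by simp))
        · push_neg at hint
          -- E(d) ∩ Eb = ∅ ; use c, wb, wc, d all in X2
          have hdwb : ¬C.H.Adj d wb := fun h => hint wb hwbB hbwb h
          have hnbwc : ¬C.H.Adj wb wc :=
            hnoedge wb hwbB hbwb wc hwcB hcwc hbwc
          have hcwb : C.H.Adj c wb := subbc wb hwbB hbwb
          obtain ⟨Z, hZ, hs⟩ := C.extS (cbp_cherry' hcwb hcwc hnbwc) (p := c)
            (by simp) (C.mem1 hc) (q := wb) (by simp [hcwb.ne']) hwbB
          rcases C.pigeon hX1 hX2 hZ hne with h | h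
          · exact hwcnX1 (h ▸ hs (by simp))
          · have hwbX2 : wb ∈ X2 := h ▸ hs (by simp)
            exact hdwb (cbp_trans hX2.1.1 hcX2 hdX2 hwbX2 (C.nadj1 hc hd1) hcwb)
    · -- B1 ⊆ {a,b,c} : counting
      push_neg at hd
      have hB1sub : ∀ z ∈ C.B1, z = a ∨ z = b ∨ z = c := by
        intro z hz
        by_cases h1 : z = a
        · exact Or.inl h1
        by_cases h2 : z = b
        · exact Or.inr (Or.inl h2)
        · exact Or.inr (Or.inr (hd z hz h1 h2))
      have hu_eq : ∀ z ∈ C.B2, z = u := by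
        intro z hz
        by_contra hne'
        apply C.htwin z u hne'
        ext t
        simp only [SimpleGraph.mem_neighborSet]
        constructor
        · intro h
          have htB := hEu z hz t h
          rcases C.mem_cases htB with h1 | h1
          · exact C.adj12 h1 hu |>.symm
          · exact absurd h (C.nadj2 hz h1)
        · intro h
          have htB := hEu u hu t h
          rcases C.mem_cases htB with h1 | h1
          · exact C.adj12 h1 hz |>.symm
          · exact absurd h (C.nadj2 hu h1)
      have hNwb : ∀ w, w ∉ C.B → C.H.Adj b w → ∀ z, C.H.Adj w z → z = b ∨ z = c := by
        intro w hwB hbw z hwz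
        have hzB := hNb w hwB hbw z hwz
        rcases C.mem_cases hzB with h1 | h1
        · rcases hB1sub z h1 with rfl | rfl | rfl
          · exact absurd hwz.symm (hEa w hwB)
          · exact Or.inl rfl
          · exact Or.inr rfl
        · exact absurd (hEu z h1 w hwz.symm) hwB
      have hEbone : ∀ w, w ∉ C.B → C.H.Adj b w → w = wb := by
        intro w hwB hbw
        apply C.vtx_eq
        intro z
        constructor
        · intro h
          rcases hNwb w hwB hbw z h with rfl | rfl
          · exact hbwb.symm
          · exact (subbc wb hwbB hbwb).symm
        · intro h
          rcases hNwb wb hwbB hbwb z h with rfl | rfl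
          · exact hbw.symm
          · exact (subbc w hwB hbw).symm
      have hNwc' : ∀ w', w' ∉ C.B → C.H.Adj c w' → ¬C.H.Adj b w' →
          ∀ z, C.H.Adj w' z → z = c := by
        intro w' hw'B hcw' hbw' z hw'z
        have hzB := hNc w' hw'B hcw' hbw' z hw'z
        rcases C.mem_cases hzB with h1 | h1
        · rcases hB1sub z h1 with rfl | rfl | rfl
          · exact absurd hw'z.symm (hEa w' hw'B)
          · exact absurd hw'z.symm hbw'
          · rfl
        · exact absurd (hEu z h1 w' hw'z.symm) hw'B
      have hEcone : ∀ w', w' ∉ C.B → C.H.Adj c w' → ¬C.H.Adj b w' → w' = wc := by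
        intro w' hw'B hcw' hbw'
        apply C.vtx_eq
        intro z
        constructor
        · intro h
          have := hNwc' w' hw'B hcw' hbw' z h
          subst this; exact hcwc.symm
        · intro h
          have := hNwc' wc hwcB hcwc hbwc z h
          subst this; exact hcw'.symm
      have hclosed : ∀ x ∈ ({a, b, c, u, wb, wc} : Set V), ∀ y, C.H.Adj x y →
          y ∈ ({a, b, c, u, wb, wc} : Set V) := by
        intro x hx y hxy
        simp only [Set.mem_insert_iff, Set.mem_singleton_iff] at hx
        have hmem : ∀ t, t ∈ C.B → t ∈ ({a, b, c, u, wb, wc} : Set V) := by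
          intro t ht
          rcases C.mem_cases ht with h1 | h1
          · rcases hB1sub t h1 with rfl | rfl | rfl <;> simp
          · have := hu_eq t h1; subst this; simp
        rcases hx with rfl | rfl | rfl | rfl | rfl | rfl
        · by_cases hyB : y ∈ C.B
          · exact hmem y hyB
          · exact absurd hxy (hEa y hyB)
        · by_cases hyB : y ∈ C.B
          · exact hmem y hyB
          · have := hEbone y hyB hxy; subst this; simp
        · by_cases hyB : y ∈ C.B
          · exact hmem y hyB
          · by_cases hby : C.H.Adj b y
            · have := hEbone y hyB hby; subst this; simp
            · have := hEcone y hyB hxy hby; subst this; simp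
        · exact hmem y (hEu x hu y hxy)
        · rcases hNwb x hwbB hbwb y hxy with rfl | rfl <;> simp
        · have := hNwc' x hwcB hcwc hbwc y hxy; subst this; simp
      have hall := closed_eq_univ C.hconn ({a, b, c, u, wb, wc} : Set V)
        ⟨a, by simp⟩ hclosed
      exact absurd (card_le_six hall) (by have := C.hcard; omega)
  · -- c ∉ X1 : immediate contradiction
    have hcwb : C.H.Adj c wb := subbc wb hwbB hbwb
    obtain ⟨Z, hZ, hs⟩ := C.extS (cbp_cherry hbwb hcwb (C.nadj1 hb hc)) (p := b)
      (by simp) (C.mem1 hb) (q := wb) (by simp) hwbB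
    rcases C.pigeon hX1 hX2 hZ hne with h | h
    · exact hcX1 (h ▸ hs (by simp))
    · exact hbnX2 (h ▸ hs (by simp))

end BicliqueAux

namespace BicliqueAux

lemma Ctx.sub_anti [Fintype V] (C : Ctx V) {x y : V} (hx : x ∈ C.B1) (hy : y ∈ C.B1)
    (hne : x ≠ y) (h1 : Sub C x y) (h2 : Sub C y x) : False := by
  obtain ⟨w, hwB, hw⟩ := C.sep hx hy hne
  rcases hw with ⟨h3, h4⟩ | ⟨h3, h4⟩
  · exact h4 (h1 w hwB h3)
  · exact h4 (h2 w hwB h3)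

lemma k13_withSub [Fintype V] (C : Ctx V) {a b c : V}
    (ha : a ∈ C.B1) (hb : b ∈ C.B1) (hc : c ∈ C.B1)
    (hnab : a ≠ b) (hnac : a ≠ c) (hnbc : b ≠ c)
    (sab : Sub C a b) : False := by
  classical
  have nba : NSub C b a :=
    nsub_of_not_sub (fun h => C.sub_anti ha hb hnab sab h)
  by_cases sca : Sub C c a
  · -- chain c ⊆ a ⊆ b
    have nac : NSub C a c :=
      nsub_of_not_sub (fun h => C.sub_anti hc ha hnac.symm sca h)
    exact k13_caseB1 C hc ha hb hnac.symm hnbc.symm hnab sca sab nac nba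
  · have nca := nsub_of_not_sub sca
    by_cases sbc : Sub C b c
    · -- chain a ⊆ b ⊆ c
      have ncb : NSub C c b :=
        nsub_of_not_sub (fun h => C.sub_anti hb hc hnbc sbc h)
      exact k13_caseB1 C ha hb hc hnab hnac hnbc sab sbc nba ncb
    · have nbc := nsub_of_not_sub sbc
      by_cases sac : Sub C a c
      · by_cases scb : Sub C c b
        · -- chain a ⊆ c ⊆ b
          exact k13_caseB1 C ha hc hb hnac hnab hnbc.symm sac scb nca nbc
        · -- min at a
          exact k13_caseB2 C ha hb hc hnab hnac nba nca nbc (nsub_of_not_sub scb)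
      · have nac := nsub_of_not_sub sac
        by_cases scb : Sub C c b
        · -- max at b : parts below are a and c
          exact k13_caseB3 C ha hc hb sab scb nac nca nba nbc
        · -- B4
          exact k13_caseB4 C ha hb hc nba nac nca nbc (nsub_of_not_sub scb)

lemma k13 [Fintype V] (C : Ctx V) {a b c : V}
    (ha : a ∈ C.B1) (hb : b ∈ C.B1) (hc : c ∈ C.B1)
    (hnab : a ≠ b) (hnac : a ≠ c) (hnbc : b ≠ c) : False := by
  classical
  by_cases s1 : Sub C a b
  · exact k13_withSub C ha hb hc hnab hnac hnbc s1
  by_cases s2 : Sub C b a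
  · exact k13_withSub C hb ha hc hnab.symm hnbc hnac s2
  by_cases s3 : Sub C a c
  · exact k13_withSub C ha hc hb hnac hnab hnbc.symm s3
  by_cases s4 : Sub C c a
  · exact k13_withSub C hc ha hb hnac.symm hnbc.symm hnab s4
  by_cases s5 : Sub C b c
  · exact k13_withSub C hb hc ha hnbc hnab.symm hnac.symm s5
  by_cases s6 : Sub C c b
  · exact k13_withSub C hc hb ha hnbc.symm hnac.symm hnab.symm s6
  exact k13_caseA C ha hb hc (nsub_of_not_sub s1) (nsub_of_not_sub s2)
    (nsub_of_not_sub s3) (nsub_of_not_sub s4) (nsub_of_not_sub s5) (nsub_of_not_sub s6)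

end BicliqueAux

namespace BicliqueAux

/-- C4, E comparable (E(v2) ⊆ E(v1)), F incomparable. -/
lemma c4CompF [Fintype V] (C : Ctx V) {v1 v2 u1 u2 : V}
    (hv1 : v1 ∈ C.B1) (hv2 : v2 ∈ C.B1) (hu1 : u1 ∈ C.B2) (hu2 : u2 ∈ C.B2)
    (hnv : v1 ≠ v2)
    (subE : Sub C v2 v1)
    (sF1 : ∃ z, z ∉ C.B ∧ C.H.Adj u1 z ∧ ¬C.H.Adj u2 z)
    (sF2 : ∃ z, z ∉ C.B ∧ C.H.Adj u2 z ∧ ¬C.H.Adj u1 z) : False := by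
  classical
  obtain ⟨z, hzB, h1z, h2z⟩ := sF1
  obtain ⟨z', hz'B, h2z', h1z'⟩ := sF2
  obtain ⟨w, hwB, h1w, h2w⟩ : ∃ w, w ∉ C.B ∧ C.H.Adj v1 w ∧ ¬C.H.Adj v2 w := by
    obtain ⟨w, hwB, hw⟩ := C.sep hv1 hv2 hnv
    rcases hw with ⟨h1, h2⟩ | ⟨h1, h2⟩
    · exact ⟨w, hwB, h1, h2⟩
    · exact absurd (subE w hwB h1) h2
  obtain ⟨Xa, hXa, hsa⟩ := C.extS (cbp_pair h1z) (p := u1) (by simp) (C.mem2 hu1)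
    (q := z) (by simp) hzB
  obtain ⟨Xb, hXb, hsb⟩ := C.extS (cbp_pair h2z') (p := u2) (by simp) (C.mem2 hu2)
    (q := z') (by simp) hz'B
  have hu1Xa : u1 ∈ Xa := hsa (by simp)
  have hzXa : z ∈ Xa := hsa (by simp)
  have hu2Xb : u2 ∈ Xb := hsb (by simp)
  have hz'Xb : z' ∈ Xb := hsb (by simp)
  have hnu2Xa : u2 ∉ Xa := C.excl hXa hu1Xa hzXa h1z (C.nadj2 hu2 hu1) h2z
  have hnu1Xb : u1 ∉ Xb := C.excl hXb hu2Xb hz'Xb h2z' (C.nadj2 hu1 hu2) h1z'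
  have hne : Xa ≠ Xb := fun h => hnu1Xb (h ▸ hu1Xa)
  obtain ⟨Xv, hXv, hsv⟩ := C.extS (cbp_pair h1w) (p := v1) (by simp) (C.mem1 hv1)
    (q := w) (by simp) hwB
  have hv1Xv : v1 ∈ Xv := hsv (by simp)
  have hnv2Xv : v2 ∉ Xv := C.excl hXv hv1Xv (hsv (by simp)) h1w (C.nadj1 hv2 hv1) h2w
  rcases C.pigeon hXa hXb hXv hne with h | h
  · -- Xv = Xa ∋ v1, w, u1, z
    have hv1Xa : v1 ∈ Xa := h ▸ hv1Xv
    have hnzv1 : ¬C.H.Adj z v1 := fun hh =>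
      cbp_no_triangle hXa.1.1 hzXa hv1Xa hu1Xa hh (C.adj12 hv1 hu1) h1z.symm
    have hnv2z : ¬C.H.Adj v2 z := fun hh => hnzv1 (subE z hzB hh).symm
    obtain ⟨Z, hZ, hs⟩ := C.extS (cbp_cherry (C.adj12 hv2 hu1) h1z.symm hnv2z)
      (p := v2) (by simp) (C.mem1 hv2) (q := z) (by simp) hzB
    rcases C.pigeon hXa hXb hZ hne with h2 | h2
    · exact (h ▸ hnv2Xv) (h2 ▸ hs (by simp))
    · exact hnu1Xb (h2 ▸ hs (by simp))
  · -- Xv = Xb ∋ v1, w, u2, z'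
    have hv1Xb : v1 ∈ Xb := h ▸ hv1Xv
    have hnz'v1 : ¬C.H.Adj z' v1 := fun hh =>
      cbp_no_triangle hXb.1.1 hz'Xb hv1Xb hu2Xb hh (C.adj12 hv1 hu2) h2z'.symm
    have hnv2z' : ¬C.H.Adj v2 z' := fun hh => hnz'v1 (subE z' hz'B hh).symm
    obtain ⟨Z, hZ, hs⟩ := C.extS (cbp_cherry (C.adj12 hv2 hu2) h2z'.symm hnv2z')
      (p := v2) (by simp) (C.mem1 hv2) (q := z') (by simp) hz'B
    rcases C.pigeon hXa hXb hZ hne with h2 | h2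
    · exact hnu2Xa (h2 ▸ hs (by simp))
    · exact (h ▸ hnv2Xv) (h2 ▸ hs (by simp))

end BicliqueAux

namespace BicliqueAux

/-- C4 deep, branch I : v1 ∉ Xu and u1 ∉ Xv. -/
lemma c4_caseI [Fintype V] (C : Ctx V) {v1 v2 u1 u2 w z : V} {Xv Xu : Set V}
    (hv1 : v1 ∈ C.B1) (hv2 : v2 ∈ C.B1) (hu1 : u1 ∈ C.B2) (hu2 : u2 ∈ C.B2)
    (hB1 : ∀ t ∈ C.B1, t = v1 ∨ t = v2) (hB2 : ∀ t ∈ C.B2, t = u1 ∨ t = u2)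
    (hE2 : ∀ ω, ω ∉ C.B → ¬C.H.Adj v2 ω) (hF2 : ∀ ζ, ζ ∉ C.B → ¬C.H.Adj u2 ζ)
    (hwB : w ∉ C.B) (hv1w : C.H.Adj v1 w)
    (hXv : Xv ∈ SSet C.H C.B) (hXu : Xu ∈ SSet C.H C.B)
    (hv1Xv : v1 ∈ Xv) (hu2Xv : u2 ∈ Xv)
    (hu1Xu : u1 ∈ Xu)
    (hnv1Xu : v1 ∉ Xu) (hnu1Xv : u1 ∉ Xv) : False := by
  classical
  have hne : Xv ≠ Xu := fun h => hnv1Xu (h ▸ hv1Xv)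
  have hE1Xv : ∀ ξ, ξ ∉ C.B → C.H.Adj v1 ξ → ξ ∈ Xv := by
    intro ξ hξB hadj
    obtain ⟨Y, hY, hs⟩ := C.extS (cbp_pair hadj) (p := v1) (by simp) (C.mem1 hv1)
      (q := ξ) (by simp) hξB
    rcases C.pigeon hXv hXu hY hne with h | h
    · exact h ▸ hs (by simp)
    · exact absurd (h ▸ hs (by simp)) hnv1Xu
  have hE1F1 : ∀ ξ, ξ ∉ C.B → C.H.Adj v1 ξ → C.H.Adj u1 ξ := by
    intro ξ hξB hadj
    by_contra hcon
    obtain ⟨Y, hY, hs⟩ := C.extS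
      (cbp_claw (C.adj12 hv1 hu1).symm (C.adj12 hv1 hu2).symm hadj.symm
        (C.nadj2 hu1 hu2) hcon (hF2 ξ hξB)) (p := v1) (by simp) (C.mem1 hv1)
      (q := ξ) (by simp) hξB
    rcases C.pigeon hXv hXu hY hne with h | h
    · exact hnu1Xv (h ▸ hs (by simp))
    · exact hnv1Xu (h ▸ hs (by simp))
  have hF1E1 : ∀ ξ, ξ ∉ C.B → C.H.Adj u1 ξ → C.H.Adj v1 ξ := by
    intro ξ hξB hadj
    by_contra hcon
    obtain ⟨Y, hY, hs⟩ := C.extS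
      (cbp_claw (C.adj12 hv1 hu1) (C.adj12 hv2 hu1) hadj.symm
        (C.nadj1 hv1 hv2) hcon (hE2 ξ hξB)) (p := u1) (by simp) (C.mem2 hu1)
      (q := ξ) (by simp) hξB
    rcases C.pigeon hXv hXu hY hne with h | h
    · exact hnu1Xv (h ▸ hs (by simp))
    · exact hnv1Xu (h ▸ hs (by simp))
  have hN : ∀ ξ, ξ ∉ C.B → C.H.Adj v1 ξ → ∀ y, C.H.Adj ξ y → y = v1 ∨ y = u1 := by
    intro ξ hξB hadj y hy
    by_cases hyB : y ∈ C.B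
    · rcases C.mem_cases hyB with h1 | h1
      · rcases hB1 y h1 with rfl | rfl
        · exact Or.inl rfl
        · exact absurd hy.symm (hE2 ξ hξB)
      · rcases hB2 y h1 with rfl | rfl
        · exact Or.inr rfl
        · exact absurd hy.symm (hF2 ξ hξB)
    · exfalso
      by_cases hv1y : C.H.Adj v1 y
      · exact cbp_no_triangle hXv.1.1 hv1Xv (hE1Xv ξ hξB hadj) (hE1Xv y hyB hv1y)
          hadj hy hv1y
      · obtain ⟨Y, hY, hs⟩ := C.extS (cbp_cherry hadj hy.symm hv1y) (p := v1)
          (by simp) (C.mem1 hv1) (q := y) (by simp [hadj.ne']) hyB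
        rcases C.pigeon hXv hXu hY hne with h | h
        · have hyXv : y ∈ Xv := h ▸ hs (by simp)
          have : C.H.Adj y u2 :=
            cbp_trans hXv.1.1 hv1Xv hyXv hu2Xv hv1y (C.adj12 hv1 hu2)
          exact hF2 y hyB this.symm
        · exact hnv1Xu (h ▸ hs (by simp))
  have hEone : ∀ ξ, ξ ∉ C.B → C.H.Adj v1 ξ → ξ = w := by
    intro ξ hξB hadj
    apply C.vtx_eq
    intro t
    constructor
    · intro h
      rcases hN ξ hξB hadj t h with rfl | rfl
      · exact hv1w.symm
      · exact (hE1F1 w hwB hv1w).symm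
    · intro h
      rcases hN w hwB hv1w t h with rfl | rfl
      · exact hadj.symm
      · exact (hE1F1 ξ hξB hadj).symm
  have hclosed : ∀ x ∈ ({v1, v2, u1, u2, w, w} : Set V), ∀ y, C.H.Adj x y →
      y ∈ ({v1, v2, u1, u2, w, w} : Set V) := by
    intro x hx y hxy
    simp only [Set.mem_insert_iff, Set.mem_singleton_iff] at hx
    have hmem : ∀ t, t ∈ C.B → t ∈ ({v1, v2, u1, u2, w, w} : Set V) := by
      intro t ht
      rcases C.mem_cases ht with h1 | h1
      · rcases hB1 t h1 with rfl | rfl <;> simp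
      · rcases hB2 t h1 with rfl | rfl <;> simp
    rcases hx with rfl | rfl | rfl | rfl | rfl | rfl
    · by_cases hyB : y ∈ C.B
      · exact hmem y hyB
      · have := hEone y hyB hxy; subst this; simp
    · by_cases hyB : y ∈ C.B
      · exact hmem y hyB
      · exact absurd hxy (hE2 y hyB)
    · by_cases hyB : y ∈ C.B
      · exact hmem y hyB
      · have := hEone y hyB (hF1E1 y hyB hxy); subst this; simp
    · by_cases hyB : y ∈ C.B
      · exact hmem y hyB
      · exact absurd hxy (hF2 y hyB)
    · rcases hN x hwB hv1w y hxy with rfl | rfl <;> simp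
    · rcases hN x hwB hv1w y hxy with rfl | rfl <;> simp
  have hall := closed_eq_univ C.hconn ({v1, v2, u1, u2, w, w} : Set V)
    ⟨v1, by simp⟩ hclosed
  exact absurd (card_le_six hall) (by have := C.hcard; omega)

/-- C4 deep, branch II-a : v1 ∈ Xu and u1 ∈ Xv. -/
lemma c4_caseIIa [Fintype V] (C : Ctx V) {v1 v2 u1 u2 w z : V} {Xv Xu : Set V}
    (hv1 : v1 ∈ C.B1) (hv2 : v2 ∈ C.B1) (hu1 : u1 ∈ C.B2) (hu2 : u2 ∈ C.B2)
    (hB1 : ∀ t ∈ C.B1, t = v1 ∨ t = v2) (hB2 : ∀ t ∈ C.B2, t = u1 ∨ t = u2)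
    (hE2 : ∀ ω, ω ∉ C.B → ¬C.H.Adj v2 ω) (hF2 : ∀ ζ, ζ ∉ C.B → ¬C.H.Adj u2 ζ)
    (hwB : w ∉ C.B) (hzB : z ∉ C.B) (hv1w : C.H.Adj v1 w) (hu1z : C.H.Adj u1 z)
    (hXv : Xv ∈ SSet C.H C.B) (hXu : Xu ∈ SSet C.H C.B)
    (hv1Xv : v1 ∈ Xv) (hu2Xv : u2 ∈ Xv) (hnv2Xv : v2 ∉ Xv)
    (hu1Xu : u1 ∈ Xu) (hv2Xu : v2 ∈ Xu) (hnu2Xu : u2 ∉ Xu)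
    (hv1Xu : v1 ∈ Xu) (hu1Xv : u1 ∈ Xv) : False := by
  classical
  have hne : Xv ≠ Xu := fun h => hnu2Xu (h ▸ hu2Xv)
  have hnE1F1 : ∀ ξ, ξ ∉ C.B → C.H.Adj v1 ξ → C.H.Adj u1 ξ → False := by
    intro ξ hξB h1 h2
    obtain ⟨Y, hY, hs⟩ := C.extS (cbp_pair h1) (p := v1) (by simp) (C.mem1 hv1)
      (q := ξ) (by simp) hξB
    rcases C.pigeon hXv hXu hY hne with h | h
    · exact cbp_no_triangle hXv.1.1 hv1Xv hu1Xv (h ▸ hs (by simp))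
        (C.adj12 hv1 hu1) h2 h1
    · exact cbp_no_triangle hXu.1.1 hv1Xu hu1Xu (h ▸ hs (by simp))
        (C.adj12 hv1 hu1) h2 h1
  have hE1Xv : ∀ ξ, ξ ∉ C.B → C.H.Adj v1 ξ → ξ ∈ Xv := by
    intro ξ hξB hadj
    obtain ⟨Y, hY, hs⟩ := C.extS (cbp_pair hadj) (p := v1) (by simp) (C.mem1 hv1)
      (q := ξ) (by simp) hξB
    rcases C.pigeon hXv hXu hY hne with h | h
    · exact h ▸ hs (by simp)
    · exact absurd (cbp_trans hXu.1.1 hv1Xu hv2Xu (h ▸ hs (by simp))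
        (C.nadj1 hv1 hv2) hadj) (hE2 ξ hξB)
  have hF1Xu : ∀ ζ, ζ ∉ C.B → C.H.Adj u1 ζ → ζ ∈ Xu := by
    intro ζ hζB hadj
    obtain ⟨Y, hY, hs⟩ := C.extS (cbp_pair hadj) (p := u1) (by simp) (C.mem2 hu1)
      (q := ζ) (by simp) hζB
    rcases C.pigeon hXv hXu hY hne with h | h
    · exact absurd (cbp_trans hXv.1.1 hu1Xv hu2Xv (h ▸ hs (by simp))
        (C.nadj2 hu1 hu2) hadj) (hF2 ζ hζB)
    · exact h ▸ hs (by simp)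
  have hNE : ∀ ξ, ξ ∉ C.B → C.H.Adj v1 ξ → ∀ y, C.H.Adj ξ y → y = v1 := by
    intro ξ hξB hadj y hy
    by_cases hyB : y ∈ C.B
    · rcases C.mem_cases hyB with h1 | h1
      · rcases hB1 y h1 with rfl | rfl
        · rfl
        · exact absurd hy.symm (hE2 ξ hξB)
      · rcases hB2 y h1 with rfl | rfl
        · exact absurd (hnE1F1 ξ hξB hadj hy.symm) id
        · exact absurd hy.symm (hF2 ξ hξB)
    · exfalso
      by_cases hv1y : C.H.Adj v1 y
      · exact cbp_no_triangle hXv.1.1 hv1Xv (hE1Xv ξ hξB hadj) (hE1Xv y hyB hv1y)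
          hadj hy hv1y
      · obtain ⟨Y, hY, hs⟩ := C.extS (cbp_cherry hadj hy.symm hv1y) (p := v1)
          (by simp) (C.mem1 hv1) (q := y) (by simp [hadj.ne']) hyB
        rcases C.pigeon hXv hXu hY hne with h | h
        · have hyXv : y ∈ Xv := h ▸ hs (by simp)
          have : C.H.Adj y u2 :=
            cbp_trans hXv.1.1 hv1Xv hyXv hu2Xv hv1y (C.adj12 hv1 hu2)
          exact hF2 y hyB this.symm
        · have hξXu : ξ ∈ Xu := h ▸ hs (by simp)
          exact hE2 ξ hξB (cbp_trans hXu.1.1 hv1Xu hv2Xu hξXu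
            (C.nadj1 hv1 hv2) hadj)
  have hNF : ∀ ζ, ζ ∉ C.B → C.H.Adj u1 ζ → ∀ y, C.H.Adj ζ y → y = u1 := by
    intro ζ hζB hadj y hy
    by_cases hyB : y ∈ C.B
    · rcases C.mem_cases hyB with h1 | h1
      · rcases hB1 y h1 with rfl | rfl
        · exact absurd (hnE1F1 ζ hζB hy.symm hadj) id
        · exact absurd hy.symm (hE2 ζ hζB)
      · rcases hB2 y h1 with rfl | rfl
        · rfl
        · exact absurd hy.symm (hF2 ζ hζB)
    · exfalso
      by_cases hu1y : C.H.Adj u1 y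
      · exact cbp_no_triangle hXu.1.1 hu1Xu (hF1Xu ζ hζB hadj) (hF1Xu y hyB hu1y)
          hadj hy hu1y
      · obtain ⟨Y, hY, hs⟩ := C.extS (cbp_cherry hadj hy.symm hu1y) (p := u1)
          (by simp) (C.mem2 hu1) (q := y) (by simp [hadj.ne']) hyB
        rcases C.pigeon hXv hXu hY hne with h | h
        · have hζXv : ζ ∈ Xv := h ▸ hs (by simp)
          exact hF2 ζ hζB (cbp_trans hXv.1.1 hu1Xv hu2Xv hζXv
            (C.nadj2 hu1 hu2) hadj)
        · have hyXu : y ∈ Xu := h ▸ hs (by simp)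
          have : C.H.Adj y v2 :=
            cbp_trans hXu.1.1 hu1Xu hyXu hv2Xu hu1y (C.adj12 hv2 hu1).symm
          exact hE2 y hyB this.symm
  have hEone : ∀ ξ, ξ ∉ C.B → C.H.Adj v1 ξ → ξ = w := by
    intro ξ hξB hadj
    apply C.vtx_eq
    intro t
    constructor
    · intro h
      have := hNE ξ hξB hadj t h; subst this; exact hv1w.symm
    · intro h
      have := hNE w hwB hv1w t h; subst this; exact hadj.symm
  have hFone : ∀ ζ, ζ ∉ C.B → C.H.Adj u1 ζ → ζ = z := by
    intro ζ hζB hadj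
    apply C.vtx_eq
    intro t
    constructor
    · intro h
      have := hNF ζ hζB hadj t h; subst this; exact hu1z.symm
    · intro h
      have := hNF z hzB hu1z t h; subst this; exact hadj.symm
  have hclosed : ∀ x ∈ ({v1, v2, u1, u2, w, z} : Set V), ∀ y, C.H.Adj x y →
      y ∈ ({v1, v2, u1, u2, w, z} : Set V) := by
    intro x hx y hxy
    simp only [Set.mem_insert_iff, Set.mem_singleton_iff] at hx
    have hmem : ∀ t, t ∈ C.B → t ∈ ({v1, v2, u1, u2, w, z} : Set V) := by
      intro t ht
      rcases C.mem_cases ht with h1 | h1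
      · rcases hB1 t h1 with rfl | rfl <;> simp
      · rcases hB2 t h1 with rfl | rfl <;> simp
    rcases hx with rfl | rfl | rfl | rfl | rfl | rfl
    · by_cases hyB : y ∈ C.B
      · exact hmem y hyB
      · have := hEone y hyB hxy; subst this; simp
    · by_cases hyB : y ∈ C.B
      · exact hmem y hyB
      · exact absurd hxy (hE2 y hyB)
    · by_cases hyB : y ∈ C.B
      · exact hmem y hyB
      · have := hFone y hyB hxy; subst this; simp
    · by_cases hyB : y ∈ C.B
      · exact hmem y hyB
      · exact absurd hxy (hF2 y hyB)
    · have := hNE x hwB hv1w y hxy; subst this; simp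
    · have := hNF x hzB hu1z y hxy; subst this; simp
  have hall := closed_eq_univ C.hconn ({v1, v2, u1, u2, w, z} : Set V)
    ⟨v1, by simp⟩ hclosed
  exact absurd (card_le_six hall) (by have := C.hcard; omega)

/-- C4 deep, branch II-b : v1 ∈ Xu and u1 ∉ Xv. -/
lemma c4_caseIIb [Fintype V] (C : Ctx V) {v1 v2 u1 u2 w z : V} {Xv Xu : Set V}
    (hv1 : v1 ∈ C.B1) (hv2 : v2 ∈ C.B1) (hu1 : u1 ∈ C.B2) (hu2 : u2 ∈ C.B2)
    (hB1 : ∀ t ∈ C.B1, t = v1 ∨ t = v2) (hB2 : ∀ t ∈ C.B2, t = u1 ∨ t = u2)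
    (hE2 : ∀ ω, ω ∉ C.B → ¬C.H.Adj v2 ω) (hF2 : ∀ ζ, ζ ∉ C.B → ¬C.H.Adj u2 ζ)
    (hwB : w ∉ C.B) (hzB : z ∉ C.B) (hv1w : C.H.Adj v1 w) (hu1z : C.H.Adj u1 z)
    (hXv : Xv ∈ SSet C.H C.B) (hXu : Xu ∈ SSet C.H C.B)
    (hv1Xv : v1 ∈ Xv) (hu2Xv : u2 ∈ Xv) (hnv2Xv : v2 ∉ Xv)
    (hu1Xu : u1 ∈ Xu) (hv2Xu : v2 ∈ Xu) (hnu2Xu : u2 ∉ Xu)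
    (hv1Xu : v1 ∈ Xu) (hnu1Xv : u1 ∉ Xv) : False := by
  classical
  have hne : Xv ≠ Xu := fun h => hnu2Xu (h ▸ hu2Xv)
  have hF1Xu : ∀ ζ, ζ ∉ C.B → C.H.Adj u1 ζ → ζ ∈ Xu := by
    intro ζ hζB hadj
    obtain ⟨Y, hY, hs⟩ := C.extS (cbp_pair hadj) (p := u1) (by simp) (C.mem2 hu1)
      (q := ζ) (by simp) hζB
    rcases C.pigeon hXv hXu hY hne with h | h
    · exact absurd (h ▸ hs (by simp)) hnu1Xv
    · exact h ▸ hs (by simp)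
  have hnE1F1 : ∀ ξ, ξ ∉ C.B → C.H.Adj v1 ξ → C.H.Adj u1 ξ → False := by
    intro ξ hξB h1 h2
    exact cbp_no_triangle hXu.1.1 hv1Xu hu1Xu (hF1Xu ξ hξB h2)
      (C.adj12 hv1 hu1) h2 h1
  have hE1Xv : ∀ ξ, ξ ∉ C.B → C.H.Adj v1 ξ → ξ ∈ Xv := by
    intro ξ hξB hadj
    obtain ⟨Y, hY, hs⟩ := C.extS (cbp_pair hadj) (p := v1) (by simp) (C.mem1 hv1)
      (q := ξ) (by simp) hξB
    rcases C.pigeon hXv hXu hY hne with h | h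
    · exact h ▸ hs (by simp)
    · exact absurd (cbp_trans hXu.1.1 hv1Xu hv2Xu (h ▸ hs (by simp))
        (C.nadj1 hv1 hv2) hadj) (hE2 ξ hξB)
  have hNE : ∀ ξ, ξ ∉ C.B → C.H.Adj v1 ξ → ∀ y, C.H.Adj ξ y → y = v1 := by
    intro ξ hξB hadj y hy
    by_cases hyB : y ∈ C.B
    · rcases C.mem_cases hyB with h1 | h1
      · rcases hB1 y h1 with rfl | rfl
        · rfl
        · exact absurd hy.symm (hE2 ξ hξB)
      · rcases hB2 y h1 with rfl | rfl
        · exact absurd (hnE1F1 ξ hξB hadj hy.symm) id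
        · exact absurd hy.symm (hF2 ξ hξB)
    · exfalso
      by_cases hv1y : C.H.Adj v1 y
      · exact cbp_no_triangle hXv.1.1 hv1Xv (hE1Xv ξ hξB hadj) (hE1Xv y hyB hv1y)
          hadj hy hv1y
      · obtain ⟨Y, hY, hs⟩ := C.extS (cbp_cherry hadj hy.symm hv1y) (p := v1)
          (by simp) (C.mem1 hv1) (q := y) (by simp [hadj.ne']) hyB
        rcases C.pigeon hXv hXu hY hne with h | h
        · have hyXv : y ∈ Xv := h ▸ hs (by simp)
          have : C.H.Adj y u2 :=
            cbp_trans hXv.1.1 hv1Xv hyXv hu2Xv hv1y (C.adj12 hv1 hu2)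
          exact hF2 y hyB this.symm
        · have hξXu : ξ ∈ Xu := h ▸ hs (by simp)
          exact hE2 ξ hξB (cbp_trans hXu.1.1 hv1Xu hv2Xu hξXu
            (C.nadj1 hv1 hv2) hadj)
  have hNF : ∀ ζ, ζ ∉ C.B → C.H.Adj u1 ζ → ∀ y, C.H.Adj ζ y → y = u1 := by
    intro ζ hζB hadj y hy
    by_cases hyB : y ∈ C.B
    · rcases C.mem_cases hyB with h1 | h1
      · rcases hB1 y h1 with rfl | rfl
        · exact absurd (hnE1F1 ζ hζB hy.symm hadj) id
        · exact absurd hy.symm (hE2 ζ hζB)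
      · rcases hB2 y h1 with rfl | rfl
        · rfl
        · exact absurd hy.symm (hF2 ζ hζB)
    · exfalso
      by_cases hu1y : C.H.Adj u1 y
      · exact cbp_no_triangle hXu.1.1 hu1Xu (hF1Xu ζ hζB hadj) (hF1Xu y hyB hu1y)
          hadj hy hu1y
      · obtain ⟨Y, hY, hs⟩ := C.extS (cbp_cherry hadj hy.symm hu1y) (p := u1)
          (by simp) (C.mem2 hu1) (q := y) (by simp [hadj.ne']) hyB
        rcases C.pigeon hXv hXu hY hne with h | h
        · exact hnu1Xv (h ▸ hs (by simp))
        · have hyXu : y ∈ Xu := h ▸ hs (by simp)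
          have : C.H.Adj y v2 :=
            cbp_trans hXu.1.1 hu1Xu hyXu hv2Xu hu1y (C.adj12 hv2 hu1).symm
          exact hE2 y hyB this.symm
  have hEone : ∀ ξ, ξ ∉ C.B → C.H.Adj v1 ξ → ξ = w := by
    intro ξ hξB hadj
    apply C.vtx_eq
    intro t
    constructor
    · intro h
      have := hNE ξ hξB hadj t h; subst this; exact hv1w.symm
    · intro h
      have := hNE w hwB hv1w t h; subst this; exact hadj.symm
  have hFone : ∀ ζ, ζ ∉ C.B → C.H.Adj u1 ζ → ζ = z := by
    intro ζ hζB hadj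
    apply C.vtx_eq
    intro t
    constructor
    · intro h
      have := hNF ζ hζB hadj t h; subst this; exact hu1z.symm
    · intro h
      have := hNF z hzB hu1z t h; subst this; exact hadj.symm
  have hclosed : ∀ x ∈ ({v1, v2, u1, u2, w, z} : Set V), ∀ y, C.H.Adj x y →
      y ∈ ({v1, v2, u1, u2, w, z} : Set V) := by
    intro x hx y hxy
    simp only [Set.mem_insert_iff, Set.mem_singleton_iff] at hx
    have hmem : ∀ t, t ∈ C.B → t ∈ ({v1, v2, u1, u2, w, z} : Set V) := by
      intro t ht
      rcases C.mem_cases ht with h1 | h1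
      · rcases hB1 t h1 with rfl | rfl <;> simp
      · rcases hB2 t h1 with rfl | rfl <;> simp
    rcases hx with rfl | rfl | rfl | rfl | rfl | rfl
    · by_cases hyB : y ∈ C.B
      · exact hmem y hyB
      · have := hEone y hyB hxy; subst this; simp
    · by_cases hyB : y ∈ C.B
      · exact hmem y hyB
      · exact absurd hxy (hE2 y hyB)
    · by_cases hyB : y ∈ C.B
      · exact hmem y hyB
      · have := hFone y hyB hxy; subst this; simp
    · by_cases hyB : y ∈ C.B
      · exact hmem y hyB
      · exact absurd hxy (hF2 y hyB)
    · have := hNE x hwB hv1w y hxy; subst this; simp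
    · have := hNF x hzB hu1z y hxy; subst this; simp
  have hall := closed_eq_univ C.hconn ({v1, v2, u1, u2, w, z} : Set V)
    ⟨v1, by simp⟩ hclosed
  exact absurd (card_le_six hall) (by have := C.hcard; omega)

end BicliqueAux

namespace BicliqueAux

lemma Ctx.sep2 [Fintype V] (C : Ctx V) {x y : V} (hx : x ∈ C.B2) (hy : y ∈ C.B2)
    (hne : x ≠ y) :
    ∃ w, w ∉ C.B ∧ ((C.H.Adj x w ∧ ¬C.H.Adj y w) ∨ (C.H.Adj y w ∧ ¬C.H.Adj x w)) :=
  C.swap.sep hx hy hne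

lemma Ctx.maxB' [Fintype V] (C : Ctx V) {w : V} (hw : w ∉ C.B)
    (hadj : ∀ b ∈ C.B1, C.H.Adj w b) : ∃ a ∈ C.B2, C.H.Adj w a :=
  C.swap.maxB hw hadj

/-- C4, both sides comparable: E(v2) ⊆ E(v1) and F(u2) ⊆ F(u1). -/
lemma c4CC [Fintype V] (C : Ctx V) {v1 v2 u1 u2 : V}
    (hv1 : v1 ∈ C.B1) (hv2 : v2 ∈ C.B1) (hu1 : u1 ∈ C.B2) (hu2 : u2 ∈ C.B2)
    (hnv : v1 ≠ v2) (hnu : u1 ≠ u2)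
    (hB1 : ∀ t ∈ C.B1, t = v1 ∨ t = v2) (hB2 : ∀ t ∈ C.B2, t = u1 ∨ t = u2)
    (subE : Sub C v2 v1) (subF : ∀ z, z ∉ C.B → C.H.Adj u2 z → C.H.Adj u1 z) :
    False := by
  classical
  obtain ⟨w, hwB, h1w, h2w⟩ : ∃ w, w ∉ C.B ∧ C.H.Adj v1 w ∧ ¬C.H.Adj v2 w := by
    obtain ⟨w, hwB, hw⟩ := C.sep hv1 hv2 hnv
    rcases hw with ⟨h1, h2⟩ | ⟨h1, h2⟩
    · exact ⟨w, hwB, h1, h2⟩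
    · exact absurd (subE w hwB h1) h2
  obtain ⟨z, hzB, h1z, h2z⟩ : ∃ z, z ∉ C.B ∧ C.H.Adj u1 z ∧ ¬C.H.Adj u2 z := by
    obtain ⟨z, hzB, hz⟩ := C.sep2 hu1 hu2 hnu
    rcases hz with ⟨h1, h2⟩ | ⟨h1, h2⟩
    · exact ⟨z, hzB, h1, h2⟩
    · exact absurd (subF z hzB h1) h2
  obtain ⟨Xv, hXv, hsv⟩ := C.extS (cbp_pair h1w) (p := v1) (by simp) (C.mem1 hv1)
    (q := w) (by simp) hwB
  obtain ⟨Xu, hXu, hsu⟩ := C.extS (cbp_pair h1z) (p := u1) (by simp) (C.mem2 hu1)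
    (q := z) (by simp) hzB
  have hv1Xv : v1 ∈ Xv := hsv (by simp)
  have hwXv : w ∈ Xv := hsv (by simp)
  have hu1Xu : u1 ∈ Xu := hsu (by simp)
  have hzXu : z ∈ Xu := hsu (by simp)
  have hnv2Xv : v2 ∉ Xv := C.excl hXv hv1Xv hwXv h1w (C.nadj1 hv2 hv1) h2w
  have hnu2Xu : u2 ∉ Xu := C.excl hXu hu1Xu hzXu h1z (C.nadj2 hu2 hu1) h2z
  by_cases hXvu : Xv = Xu
  · -- single biclique X containing v1, w, u1, z
    subst hXvu
    have hu1X : u1 ∈ Xv := hu1Xu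
    have hzX : z ∈ Xv := hzXu
    have hnu2X : u2 ∉ Xv := hnu2Xu
    have hnu1w : ¬C.H.Adj u1 w := fun h =>
      cbp_no_triangle hXv.1.1 hv1Xv hu1X hwXv (C.adj12 hv1 hu1) h h1w
    have hnu2w : ¬C.H.Adj u2 w := fun h => hnu1w (subF w hwB h)
    have hnzv1 : ¬C.H.Adj z v1 := fun h =>
      cbp_no_triangle hXv.1.1 hzX hv1Xv hu1X h (C.adj12 hv1 hu1) h1z.symm
    have hnv2z : ¬C.H.Adj v2 z := fun h => hnzv1 (subE z hzB h).symm
    by_cases hF2 : ∃ ζ, ζ ∉ C.B ∧ C.H.Adj u2 ζ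
    · obtain ⟨ζ, hζB, h2ζ⟩ := hF2
      have h1ζ : C.H.Adj u1 ζ := subF ζ hζB h2ζ
      obtain ⟨Y, hY, hsY⟩ := C.extS (cbp_cherry h1ζ h2ζ (C.nadj2 hu1 hu2))
        (p := u1) (by simp) (C.mem2 hu1) (q := ζ) (by simp [h1ζ.ne]) hζB
      have hu1Y : u1 ∈ Y := hsY (by simp)
      have hu2Y : u2 ∈ Y := hsY (by simp)
      have hζY : ζ ∈ Y := hsY (by simp)
      have hneY : Xv ≠ Y := fun h => hnu2X (h ▸ hu2Y)
      by_cases hE2 : ∃ ω, ω ∉ C.B ∧ C.H.Adj v2 ω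
      · obtain ⟨ω, hωB, h2ω⟩ := hE2
        have h1ω : C.H.Adj v1 ω := subE ω hωB h2ω
        obtain ⟨Z, hZ, hsZ⟩ := C.extS (cbp_cherry h1ω h2ω (C.nadj1 hv1 hv2))
          (p := v1) (by simp) (C.mem1 hv1) (q := ω) (by simp [h1ω.ne]) hωB
        rcases C.pigeon hXv hY hZ hneY with h | h
        · exact hnv2Xv (h ▸ hsZ (by simp))
        · -- v1, v2, ω ∈ Y ; ω is adjacent to u1 or u2, giving a triangle in Y
          have hv1Y : v1 ∈ Y := h ▸ hsZ (by simp)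
          have hωY : ω ∈ Y := h ▸ hsZ (by simp)
          obtain ⟨a, haB2, hωa⟩ := C.maxB' hωB (by
            intro b hb
            rcases hB1 b hb with rfl | rfl
            · exact h1ω.symm
            · exact h2ω.symm)
          rcases hB2 a haB2 with rfl | rfl
          · exact cbp_no_triangle hY.1.1 hωY hv1Y hu1Y h1ω.symm
              (C.adj12 hv1 hu1) hωa
          · exact cbp_no_triangle hY.1.1 hωY hv1Y hu2Y h1ω.symm
              (C.adj12 hv1 hu2) hωa
      · push_neg at hE2
        have hnv2z' : ¬C.H.Adj v2 z := hE2 z hzB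
        obtain ⟨Z1, hZ1, hs1⟩ := C.extS (cbp_cherry (C.adj12 hv2 hu1) h1z.symm hnv2z')
          (p := v2) (by simp) (C.mem1 hv2) (q := z) (by simp) hzB
        have hZ1Y : Z1 = Y := by
          rcases C.pigeon hXv hY hZ1 hneY with h | h
          · exact absurd (h ▸ hs1 (by simp)) hnv2Xv
          · exact h
        have hv2Y : v2 ∈ Y := hZ1Y ▸ hs1 (by simp)
        obtain ⟨Z2, hZ2, hs2⟩ := C.extS (cbp_cherry (C.adj12 hv1 hu2).symm h1w.symm
          hnu2w) (p := v1) (by simp) (C.mem1 hv1) (q := w) (by simp) hwB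
        have hZ2Y : Z2 = Y := by
          rcases C.pigeon hXv hY hZ2 hneY with h | h
          · exact absurd (h ▸ hs2 (by simp)) hnu2X
          · exact h
        have hv1Y : v1 ∈ Y := hZ2Y ▸ hs2 (by simp)
        have hwY : w ∈ Y := hZ2Y ▸ hs2 (by simp)
        exact hE2 w hwB (cbp_trans hY.1.1 hv1Y hv2Y hwY (C.nadj1 hv1 hv2) h1w)
    · push_neg at hF2
      have hnu2w' : ¬C.H.Adj u2 w := hF2 w hwB
      by_cases hE2 : ∃ ω, ω ∉ C.B ∧ C.H.Adj v2 ω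
      · obtain ⟨ω, hωB, h2ω⟩ := hE2
        have h1ω : C.H.Adj v1 ω := subE ω hωB h2ω
        obtain ⟨Y, hY, hsY⟩ := C.extS (cbp_cherry h1ω h2ω (C.nadj1 hv1 hv2))
          (p := v1) (by simp) (C.mem1 hv1) (q := ω) (by simp [h1ω.ne]) hωB
        have hv1Y : v1 ∈ Y := hsY (by simp)
        have hv2Y : v2 ∈ Y := hsY (by simp)
        have hneY : Xv ≠ Y := fun h => hnv2Xv (h ▸ hv2Y)
        obtain ⟨Z1, hZ1, hs1⟩ := C.extS (cbp_cherry (C.adj12 hv1 hu2).symm h1w.symm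
          hnu2w') (p := v1) (by simp) (C.mem1 hv1) (q := w) (by simp) hwB
        have hZ1Y : Z1 = Y := by
          rcases C.pigeon hXv hY hZ1 hneY with h | h
          · exact absurd (h ▸ hs1 (by simp)) hnu2X
          · exact h
        have hu2Y : u2 ∈ Y := hZ1Y ▸ hs1 (by simp)
        obtain ⟨Z2, hZ2, hs2⟩ := C.extS (cbp_cherry (C.adj12 hv2 hu1) h1z.symm
          hnv2z) (p := v2) (by simp) (C.mem1 hv2) (q := z) (by simp) hzB
        have hZ2Y : Z2 = Y := by
          rcases C.pigeon hXv hY hZ2 hneY with h | h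
          · exact absurd (h ▸ hs2 (by simp)) hnv2Xv
          · exact h
        have hu1Y : u1 ∈ Y := hZ2Y ▸ hs2 (by simp)
        have hzY : z ∈ Y := hZ2Y ▸ hs2 (by simp)
        exact hF2 z hzB (cbp_trans hY.1.1 hu1Y hu2Y hzY (C.nadj2 hu1 hu2) h1z)
      · push_neg at hE2
        obtain ⟨Y, hY, hsY⟩ := C.extS (cbp_cherry (C.adj12 hv2 hu1) h1z.symm
          (hE2 z hzB)) (p := v2) (by simp) (C.mem1 hv2) (q := z) (by simp) hzB
        have hv2Y : v2 ∈ Y := hsY (by simp)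
        have hneY : Xv ≠ Y := fun h => hnv2Xv (h ▸ hv2Y)
        obtain ⟨Z, hZ, hsZ⟩ := C.extS (cbp_cherry (C.adj12 hv1 hu2).symm h1w.symm
          hnu2w') (p := v1) (by simp) (C.mem1 hv1) (q := w) (by simp) hwB
        have hZY : Z = Y := by
          rcases C.pigeon hXv hY hZ hneY with h | h
          · exact absurd (h ▸ hsZ (by simp)) hnu2X
          · exact h
        have hv1Y : v1 ∈ Y := hZY ▸ hsZ (by simp)
        have hwY : w ∈ Y := hZY ▸ hsZ (by simp)
        exact hE2 w hwB (cbp_trans hY.1.1 hv1Y hv2Y hwY (C.nadj1 hv1 hv2) h1w)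
  · -- Xv ≠ Xu
    have hE2F2 : ∀ ω, ω ∉ C.B → C.H.Adj v2 ω → C.H.Adj u2 ω := by
      intro ω hωB h2ω
      by_contra hcon
      obtain ⟨Y, hY, hs⟩ := C.extS (cbp_cherry (C.adj12 hv2 hu2).symm h2ω.symm hcon)
        (p := v2) (by simp) (C.mem1 hv2) (q := ω) (by simp [h2ω.ne]) hωB
      rcases C.pigeon hXv hXu hY hXvu with h | h
      · exact hnv2Xv (h ▸ hs (by simp))
      · exact hnu2Xu (h ▸ hs (by simp))
    by_cases hE2 : ∃ ω, ω ∉ C.B ∧ C.H.Adj v2 ω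
    · obtain ⟨ω, hωB, h2ω⟩ := hE2
      have h1ω : C.H.Adj v1 ω := subE ω hωB h2ω
      have h1ωF : C.H.Adj u1 ω := subF ω hωB (hE2F2 ω hωB h2ω)
      obtain ⟨Z, hZ, hsZ⟩ := C.extS (cbp_cherry h1ω h2ω (C.nadj1 hv1 hv2))
        (p := v1) (by simp) (C.mem1 hv1) (q := ω) (by simp [h1ω.ne]) hωB
      rcases C.pigeon hXv hXu hZ hXvu with h | h
      · exact hnv2Xv (h ▸ hsZ (by simp))
      · exact cbp_no_triangle hXu.1.1 (h ▸ hsZ (by simp) : ω ∈ Xu)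
          (h ▸ hsZ (by simp) : v1 ∈ Xu) hu1Xu h1ω.symm (C.adj12 hv1 hu1) h1ωF.symm
    · push_neg at hE2
      have hF2 : ∀ ζ, ζ ∉ C.B → ¬C.H.Adj u2 ζ := by
        intro ζ hζB hcon
        -- F2 ⊆ E2 : otherwise a cherry gives a contradiction
        by_cases h2ζE : C.H.Adj v2 ζ
        · exact hE2 ζ hζB h2ζE
        · obtain ⟨Y, hY, hs⟩ := C.extS (cbp_cherry (C.adj12 hv2 hu2) hcon.symm h2ζE)
            (p := v2) (by simp) (C.mem1 hv2) (q := ζ) (by simp) hζB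
          rcases C.pigeon hXv hXu hY hXvu with h | h
          · exact hnv2Xv (h ▸ hs (by simp))
          · exact hnu2Xu (h ▸ hs (by simp))
      have hv2Xu : v2 ∈ Xu := by
        obtain ⟨Z, hZ, hs⟩ := C.extS (cbp_cherry (C.adj12 hv2 hu1) h1z.symm
          (hE2 z hzB)) (p := v2) (by simp) (C.mem1 hv2) (q := z) (by simp) hzB
        rcases C.pigeon hXv hXu hZ hXvu with h | h
        · exact absurd (h ▸ hs (by simp)) hnv2Xv
        · exact h ▸ hs (by simp)
      have hu2Xv : u2 ∈ Xv := by
        obtain ⟨Z, hZ, hs⟩ := C.extS (cbp_cherry (C.adj12 hv1 hu2).symm h1w.symm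
          (hF2 w hwB)) (p := v1) (by simp) (C.mem1 hv1) (q := w) (by simp) hwB
        rcases C.pigeon hXv hXu hZ hXvu with h | h
        · exact h ▸ hs (by simp)
        · exact absurd (h ▸ hs (by simp)) hnu2Xu
      by_cases hv1Xu : v1 ∈ Xu
      · by_cases hu1Xv : u1 ∈ Xv
        · exact c4_caseIIa C hv1 hv2 hu1 hu2 hB1 hB2 hE2 hF2 hwB hzB h1w h1z
            hXv hXu hv1Xv hu2Xv hnv2Xv hu1Xu hv2Xu hnu2Xu hv1Xu hu1Xv
        · exact c4_caseIIb C hv1 hv2 hu1 hu2 hB1 hB2 hE2 hF2 hwB hzB h1w h1z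
            hXv hXu hv1Xv hu2Xv hnv2Xv hu1Xu hv2Xu hnu2Xu hv1Xu hu1Xv
      · by_cases hu1Xv : u1 ∈ Xv
        · -- mirror of II-b via part swap
          exact c4_caseIIb C.swap hu1 hu2 hv1 hv2 hB2 hB1 hF2 hE2 hzB hwB h1z h1w
            hXu hXv hu1Xu hv2Xu hnu2Xu hv1Xv hu2Xv hnv2Xv hu1Xv hv1Xu
        · exact c4_caseI C (z := z) hv1 hv2 hu1 hu2 hB1 hB2 hE2 hF2 hwB h1w
            hXv hXu hv1Xv hu2Xv hu1Xu hv1Xu hu1Xv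

end BicliqueAux

namespace BicliqueAux

/-- C4, both incomparable: the core after fixing which biclique contains u1. -/
lemma c4EF_core [Fintype V] (C : Ctx V) {v1 v2 u1 u2 w w' z z' : V} {X1 X2 : Set V}
    (hv1 : v1 ∈ C.B1) (hv2 : v2 ∈ C.B1) (hu1 : u1 ∈ C.B2) (hu2 : u2 ∈ C.B2)
    (hB1 : ∀ t ∈ C.B1, t = v1 ∨ t = v2) (hB2 : ∀ t ∈ C.B2, t = u1 ∨ t = u2)
    (hwB : w ∉ C.B) (h1w : C.H.Adj v1 w) (h2w : ¬C.H.Adj v2 w)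
    (hw'B : w' ∉ C.B) (h2w' : C.H.Adj v2 w') (h1w' : ¬C.H.Adj v1 w')
    (hzB : z ∉ C.B) (hz1 : C.H.Adj u1 z) (hz2 : ¬C.H.Adj u2 z)
    (hz'B : z' ∉ C.B) (hz'2 : C.H.Adj u2 z') (hz'1 : ¬C.H.Adj u1 z')
    (hX1 : X1 ∈ SSet C.H C.B) (hX2 : X2 ∈ SSet C.H C.B) (hne : X1 ≠ X2)
    (hv1X1 : v1 ∈ X1) (hwX1 : w ∈ X1) (hnv2X1 : v2 ∉ X1) (hnu2X1 : u2 ∉ X1)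
    (hv2X2 : v2 ∈ X2) (hw'X2 : w' ∈ X2) (hnv1X2 : v1 ∉ X2)
    (hu1X1 : u1 ∈ X1) (hzX1 : z ∈ X1) : False := by
  classical
  -- the biclique of the edge u2–z' must be X2
  obtain ⟨Xc, hXc, hsc⟩ := C.extS (cbp_pair hz'2) (p := u2) (by simp) (C.mem2 hu2)
    (q := z') (by simp) hz'B
  have hnu1Xc : u1 ∉ Xc := C.excl hXc (hsc (by simp)) (hsc (by simp)) hz'2
    (C.nadj2 hu1 hu2) hz'1
  have hXc2 : Xc = X2 := by
    rcases C.pigeon hX1 hX2 hXc hne with h | h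
    · exact absurd (h ▸ hu1X1) hnu1Xc
    · exact h
  have hu2X2 : u2 ∈ X2 := hXc2 ▸ hsc (by simp)
  have hnu1X2 : u1 ∉ X2 := hXc2 ▸ hnu1Xc
  -- E1 ∩ E2 = ∅ and F1 ∩ F2 = ∅
  have hE12 : ∀ y, y ∉ C.B → C.H.Adj v1 y → C.H.Adj v2 y → False := by
    intro y hyB h1 h2
    obtain ⟨Z, hZ, hs⟩ := C.extS (cbp_cherry h1 h2 (C.nadj1 hv1 hv2)) (p := v1)
      (by simp) (C.mem1 hv1) (q := y) (by simp [h1.ne]) hyB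
    rcases C.pigeon hX1 hX2 hZ hne with h | h
    · exact hnv2X1 (h ▸ hs (by simp))
    · exact hnv1X2 (h ▸ hs (by simp))
  have hF12 : ∀ y, y ∉ C.B → C.H.Adj u1 y → C.H.Adj u2 y → False := by
    intro y hyB h1 h2
    obtain ⟨Z, hZ, hs⟩ := C.extS (cbp_cherry h1 h2 (C.nadj2 hu1 hu2)) (p := u1)
      (by simp) (C.mem2 hu1) (q := y) (by simp [h1.ne]) hyB
    rcases C.pigeon hX1 hX2 hZ hne with h | h
    · exact hnu2X1 (h ▸ hs (by simp))
    · exact hnu1X2 (h ▸ hs (by simp))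
  -- F2 = E1 pointwise
  have hF2E1 : ∀ ξ, ξ ∉ C.B → C.H.Adj u2 ξ → C.H.Adj v1 ξ := by
    intro ξ hξB hadj
    by_contra hcon
    obtain ⟨Z, hZ, hs⟩ := C.extS (cbp_cherry (C.adj12 hv1 hu2) hadj.symm hcon)
      (p := v1) (by simp) (C.mem1 hv1) (q := ξ) (by simp) hξB
    rcases C.pigeon hX1 hX2 hZ hne with h | h
    · exact hnu2X1 (h ▸ hs (by simp))
    · exact hnv1X2 (h ▸ hs (by simp))
  have hE1F2 : ∀ ξ, ξ ∉ C.B → C.H.Adj v1 ξ → C.H.Adj u2 ξ := by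
    intro ξ hξB hadj
    by_contra hcon
    obtain ⟨Z, hZ, hs⟩ := C.extS (cbp_cherry (C.adj12 hv1 hu2).symm hadj.symm hcon)
      (p := v1) (by simp) (C.mem1 hv1) (q := ξ) (by simp) hξB
    rcases C.pigeon hX1 hX2 hZ hne with h | h
    · exact hnu2X1 (h ▸ hs (by simp))
    · exact hnv1X2 (h ▸ hs (by simp))
  -- F1 = E2 pointwise
  have hF1E2 : ∀ ξ, ξ ∉ C.B → C.H.Adj u1 ξ → C.H.Adj v2 ξ := by
    intro ξ hξB hadj
    by_contra hcon
    obtain ⟨Z, hZ, hs⟩ := C.extS (cbp_cherry (C.adj12 hv2 hu1) hadj.symm hcon)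
      (p := v2) (by simp) (C.mem1 hv2) (q := ξ) (by simp) hξB
    rcases C.pigeon hX1 hX2 hZ hne with h | h
    · exact hnv2X1 (h ▸ hs (by simp))
    · exact hnu1X2 (h ▸ hs (by simp))
  have hE2F1 : ∀ ξ, ξ ∉ C.B → C.H.Adj v2 ξ → C.H.Adj u1 ξ := by
    intro ξ hξB hadj
    by_contra hcon
    obtain ⟨Z, hZ, hs⟩ := C.extS (cbp_cherry (C.adj12 hv2 hu1).symm hadj.symm hcon)
      (p := v2) (by simp) (C.mem1 hv2) (q := ξ) (by simp) hξB
    rcases C.pigeon hX1 hX2 hZ hne with h | h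
    · exact hnv2X1 (h ▸ hs (by simp))
    · exact hnu1X2 (h ▸ hs (by simp))
  have hE1X1 : ∀ ξ, ξ ∉ C.B → C.H.Adj v1 ξ → ξ ∈ X1 := by
    intro ξ hξB hadj
    obtain ⟨Z, hZ, hs⟩ := C.extS (cbp_pair hadj) (p := v1) (by simp) (C.mem1 hv1)
      (q := ξ) (by simp) hξB
    rcases C.pigeon hX1 hX2 hZ hne with h | h
    · exact h ▸ hs (by simp)
    · exact absurd (h ▸ hs (by simp)) hnv1X2
  have hE2X2 : ∀ ξ, ξ ∉ C.B → C.H.Adj v2 ξ → ξ ∈ X2 := by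
    intro ξ hξB hadj
    obtain ⟨Z, hZ, hs⟩ := C.extS (cbp_pair hadj) (p := v2) (by simp) (C.mem1 hv2)
      (q := ξ) (by simp) hξB
    rcases C.pigeon hX1 hX2 hZ hne with h | h
    · exact absurd (h ▸ hs (by simp)) hnv2X1
    · exact h ▸ hs (by simp)
  -- complete bipartite between E1 and E2
  have hcomp : ∀ ξ, ξ ∉ C.B → C.H.Adj v1 ξ → ∀ η, η ∉ C.B → C.H.Adj v2 η →
      C.H.Adj ξ η := by
    intro ξ hξB hadj η hηB hadj2
    have hnv2ξ : ¬C.H.Adj v2 ξ := fun h => hE12 ξ hξB hadj h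
    obtain ⟨Z, hZ, hs⟩ := C.extS (cbp_cherry (C.adj12 hv2 hu2)
      (hE1F2 ξ hξB hadj).symm hnv2ξ) (p := v2) (by simp) (C.mem1 hv2)
      (q := ξ) (by simp) hξB
    have hξX2 : ξ ∈ X2 := by
      rcases C.pigeon hX1 hX2 hZ hne with h | h
      · exact absurd (h ▸ hs (by simp)) hnv2X1
      · exact h ▸ hs (by simp)
    exact cbp_trans hX2.1.1 hv2X2 hξX2 (hE2X2 η hηB hadj2) hnv2ξ hadj2
  have hE1ind : ∀ ξ, ξ ∉ C.B → C.H.Adj v1 ξ → ∀ η, η ∉ C.B → C.H.Adj v1 η →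
      ¬C.H.Adj ξ η := fun ξ hξB h1 η hηB h2 hcon =>
    cbp_no_triangle hX1.1.1 hv1X1 (hE1X1 ξ hξB h1) (hE1X1 η hηB h2) h1 hcon h2
  have hE2ind : ∀ ξ, ξ ∉ C.B → C.H.Adj v2 ξ → ∀ η, η ∉ C.B → C.H.Adj v2 η →
      ¬C.H.Adj ξ η := fun ξ hξB h1 η hηB h2 hcon =>
    cbp_no_triangle hX2.1.1 hv2X2 (hE2X2 ξ hξB h1) (hE2X2 η hηB h2) h1 hcon h2
  have hNE1 : ∀ ξ, ξ ∉ C.B → C.H.Adj v1 ξ → ∀ y, C.H.Adj ξ y →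
      y = v1 ∨ y = u2 ∨ (y ∉ C.B ∧ C.H.Adj v2 y) := by
    intro ξ hξB hadj y hy
    by_cases hyB : y ∈ C.B
    · rcases C.mem_cases hyB with h1 | h1
      · rcases hB1 y h1 with rfl | rfl
        · exact Or.inl rfl
        · exact absurd (hE12 ξ hξB hadj hy.symm) id
      · rcases hB2 y h1 with rfl | rfl
        · exact absurd (hF12 ξ hξB hy.symm (hE1F2 ξ hξB hadj)) id
        · exact Or.inr (Or.inl rfl)
    · by_cases hv1y : C.H.Adj v1 y
      · exact absurd hy (hE1ind ξ hξB hadj y hyB hv1y)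
      · obtain ⟨Z, hZ, hs⟩ := C.extS (cbp_cherry hadj hy.symm hv1y) (p := v1)
          (by simp) (C.mem1 hv1) (q := y) (by simp [hadj.ne']) hyB
        have hyX1 : y ∈ X1 := by
          rcases C.pigeon hX1 hX2 hZ hne with h | h
          · exact h ▸ hs (by simp)
          · exact absurd (h ▸ hs (by simp)) hnv1X2
        have : C.H.Adj y u1 :=
          cbp_trans hX1.1.1 hv1X1 hyX1 hu1X1 hv1y (C.adj12 hv1 hu1)
        exact Or.inr (Or.inr ⟨hyB, hF1E2 y hyB this.symm⟩)
  have hNE2 : ∀ ξ, ξ ∉ C.B → C.H.Adj v2 ξ → ∀ y, C.H.Adj ξ y →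
      y = v2 ∨ y = u1 ∨ (y ∉ C.B ∧ C.H.Adj v1 y) := by
    intro ξ hξB hadj y hy
    by_cases hyB : y ∈ C.B
    · rcases C.mem_cases hyB with h1 | h1
      · rcases hB1 y h1 with rfl | rfl
        · exact absurd (hE12 ξ hξB hy.symm hadj) id
        · exact Or.inl rfl
      · rcases hB2 y h1 with rfl | rfl
        · exact Or.inr (Or.inl rfl)
        · exact absurd (hF12 ξ hξB (hE2F1 ξ hξB hadj) hy.symm) id
    · by_cases hv2y : C.H.Adj v2 y
      · exact absurd hy (hE2ind ξ hξB hadj y hyB hv2y)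
      · obtain ⟨Z, hZ, hs⟩ := C.extS (cbp_cherry hadj hy.symm hv2y) (p := v2)
          (by simp) (C.mem1 hv2) (q := y) (by simp [hadj.ne']) hyB
        have hyX2 : y ∈ X2 := by
          rcases C.pigeon hX1 hX2 hZ hne with h | h
          · exact absurd (h ▸ hs (by simp)) hnv2X1
          · exact h ▸ hs (by simp)
        have : C.H.Adj y u2 :=
          cbp_trans hX2.1.1 hv2X2 hyX2 hu2X2 hv2y (C.adj12 hv2 hu2)
        exact Or.inr (Or.inr ⟨hyB, hF2E1 y hyB this.symm⟩)
  have hE1one : ∀ ξ, ξ ∉ C.B → C.H.Adj v1 ξ → ξ = w := by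
    intro ξ hξB hadj
    apply C.vtx_eq
    intro t
    constructor
    · intro h
      rcases hNE1 ξ hξB hadj t h with rfl | rfl | ⟨htB, ht2⟩
      · exact h1w.symm
      · exact (hE1F2 w hwB h1w).symm
      · exact hcomp w hwB h1w t htB ht2
    · intro h
      rcases hNE1 w hwB h1w t h with rfl | rfl | ⟨htB, ht2⟩
      · exact hadj.symm
      · exact (hE1F2 ξ hξB hadj).symm
      · exact hcomp ξ hξB hadj t htB ht2
  have hE2one : ∀ ξ, ξ ∉ C.B → C.H.Adj v2 ξ → ξ = w' := by
    intro ξ hξB hadj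
    apply C.vtx_eq
    intro t
    constructor
    · intro h
      rcases hNE2 ξ hξB hadj t h with rfl | rfl | ⟨htB, ht2⟩
      · exact h2w'.symm
      · exact (hE2F1 w' hw'B h2w').symm
      · exact (hcomp t htB ht2 w' hw'B h2w').symm
    · intro h
      rcases hNE2 w' hw'B h2w' t h with rfl | rfl | ⟨htB, ht2⟩
      · exact hadj.symm
      · exact (hE2F1 ξ hξB hadj).symm
      · exact (hcomp t htB ht2 ξ hξB hadj).symm
  have hclosed : ∀ x ∈ ({v1, v2, u1, u2, w, w'} : Set V), ∀ y, C.H.Adj x y →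
      y ∈ ({v1, v2, u1, u2, w, w'} : Set V) := by
    intro x hx y hxy
    simp only [Set.mem_insert_iff, Set.mem_singleton_iff] at hx
    have hmem : ∀ t, t ∈ C.B → t ∈ ({v1, v2, u1, u2, w, w'} : Set V) := by
      intro t ht
      rcases C.mem_cases ht with h1 | h1
      · rcases hB1 t h1 with rfl | rfl <;> simp
      · rcases hB2 t h1 with rfl | rfl <;> simp
    rcases hx with rfl | rfl | rfl | rfl | rfl | rfl
    · by_cases hyB : y ∈ C.B
      · exact hmem y hyB
      · have := hE1one y hyB hxy; subst this; simp
    · by_cases hyB : y ∈ C.B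
      · exact hmem y hyB
      · have := hE2one y hyB hxy; subst this; simp
    · by_cases hyB : y ∈ C.B
      · exact hmem y hyB
      · have := hE2one y hyB (hF1E2 y hyB hxy); subst this; simp
    · by_cases hyB : y ∈ C.B
      · exact hmem y hyB
      · have := hE1one y hyB (hF2E1 y hyB hxy); subst this; simp
    · rcases hNE1 x hwB h1w y hxy with rfl | rfl | ⟨hyB, hy2⟩
      · simp
      · simp
      · have := hE2one y hyB hy2; subst this; simp
    · rcases hNE2 x hw'B h2w' y hxy with rfl | rfl | ⟨hyB, hy2⟩
      · simp
      · simp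
      · have := hE1one y hyB hy2; subst this; simp
  have hall := closed_eq_univ C.hconn ({v1, v2, u1, u2, w, w'} : Set V)
    ⟨v1, by simp⟩ hclosed
  exact absurd (card_le_six hall) (by have := C.hcard; omega)

/-- C4, both sides incomparable. -/
lemma c4EF [Fintype V] (C : Ctx V) {v1 v2 u1 u2 : V}
    (hv1 : v1 ∈ C.B1) (hv2 : v2 ∈ C.B1) (hu1 : u1 ∈ C.B2) (hu2 : u2 ∈ C.B2)
    (hB1 : ∀ t ∈ C.B1, t = v1 ∨ t = v2) (hB2 : ∀ t ∈ C.B2, t = u1 ∨ t = u2)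
    {w w' z z' : V}
    (hwB : w ∉ C.B) (h1w : C.H.Adj v1 w) (h2w : ¬C.H.Adj v2 w)
    (hw'B : w' ∉ C.B) (h2w' : C.H.Adj v2 w') (h1w' : ¬C.H.Adj v1 w')
    (hzB : z ∉ C.B) (hz1 : C.H.Adj u1 z) (hz2 : ¬C.H.Adj u2 z)
    (hz'B : z' ∉ C.B) (hz'2 : C.H.Adj u2 z') (hz'1 : ¬C.H.Adj u1 z') : False := by
  classical
  obtain ⟨X1, hX1, hs1⟩ := C.extS (cbp_pair h1w) (p := v1) (by simp) (C.mem1 hv1)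
    (q := w) (by simp) hwB
  obtain ⟨X2, hX2, hs2⟩ := C.extS (cbp_pair h2w') (p := v2) (by simp) (C.mem1 hv2)
    (q := w') (by simp) hw'B
  have hv1X1 : v1 ∈ X1 := hs1 (by simp)
  have hwX1 : w ∈ X1 := hs1 (by simp)
  have hv2X2 : v2 ∈ X2 := hs2 (by simp)
  have hw'X2 : w' ∈ X2 := hs2 (by simp)
  have hnv2X1 : v2 ∉ X1 := C.excl hX1 hv1X1 hwX1 h1w (C.nadj1 hv2 hv1) h2w
  have hnv1X2 : v1 ∉ X2 := C.excl hX2 hv2X2 hw'X2 h2w' (C.nadj1 hv1 hv2) h1w'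
  have hne : X1 ≠ X2 := fun h => hnv1X2 (h ▸ hv1X1)
  obtain ⟨Xb, hXb, hsb⟩ := C.extS (cbp_pair hz1) (p := u1) (by simp) (C.mem2 hu1)
    (q := z) (by simp) hzB
  have hu1Xb : u1 ∈ Xb := hsb (by simp)
  have hzXb : z ∈ Xb := hsb (by simp)
  have hnu2Xb : u2 ∉ Xb := C.excl hXb hu1Xb hzXb hz1 (C.nadj2 hu2 hu1) hz2
  rcases C.pigeon hX1 hX2 hXb hne with h | h
  · exact c4EF_core C hv1 hv2 hu1 hu2 hB1 hB2 hwB h1w h2w hw'B h2w' h1w'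
      hzB hz1 hz2 hz'B hz'2 hz'1 hX1 hX2 hne hv1X1 hwX1 hnv2X1 (h ▸ hnu2Xb)
      hv2X2 hw'X2 hnv1X2 (h ▸ hu1Xb) (h ▸ hzXb)
  · exact c4EF_core C hv2 hv1 hu1 hu2 (fun t ht => (hB1 t ht).symm)
      hB2 hw'B h2w' h1w' hwB h1w h2w hzB hz1 hz2 hz'B hz'2 hz'1
      hX2 hX1 hne.symm hv2X2 hw'X2 hnv1X2 (h ▸ hnu2Xb) hv1X1 hwX1 hnv2X1
      (h ▸ hu1Xb) (h ▸ hzXb)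

end BicliqueAux

namespace BicliqueAux

/-- C4 dispatcher. -/
lemma c4 [Fintype V] (C : Ctx V) {v1 v2 u1 u2 : V}
    (hv1 : v1 ∈ C.B1) (hv2 : v2 ∈ C.B1) (hu1 : u1 ∈ C.B2) (hu2 : u2 ∈ C.B2)
    (hnv : v1 ≠ v2) (hnu : u1 ≠ u2)
    (hB1 : ∀ t ∈ C.B1, t = v1 ∨ t = v2) (hB2 : ∀ t ∈ C.B2, t = u1 ∨ t = u2) :
    False := by
  classical
  have hB1' : ∀ t ∈ C.B1, t = v2 ∨ t = v1 := fun t ht => (hB1 t ht).symm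
  have hB2' : ∀ t ∈ C.B2, t = u2 ∨ t = u1 := fun t ht => (hB2 t ht).symm
  by_cases e1 : Sub C v1 v2
  · by_cases f1 : Sub C.swap u1 u2
    · exact c4CC C hv2 hv1 hu2 hu1 hnv.symm hnu.symm hB1' hB2' e1 f1
    · by_cases f2 : Sub C.swap u2 u1
      · exact c4CC C hv2 hv1 hu1 hu2 hnv.symm hnu hB1' hB2 e1 f2
      · exact c4CompF C hv2 hv1 hu1 hu2 hnv.symm e1
          (nsub_of_not_sub (C := C.swap) f1) (nsub_of_not_sub (C := C.swap) f2)
  · by_cases e2 : Sub C v2 v1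
    · by_cases f1 : Sub C.swap u1 u2
      · exact c4CC C hv1 hv2 hu2 hu1 hnv hnu.symm hB1 hB2' e2 f1
      · by_cases f2 : Sub C.swap u2 u1
        · exact c4CC C hv1 hv2 hu1 hu2 hnv hnu hB1 hB2 e2 f2
        · exact c4CompF C hv1 hv2 hu1 hu2 hnv e2
            (nsub_of_not_sub (C := C.swap) f1) (nsub_of_not_sub (C := C.swap) f2)
    · -- E incomparable
      obtain ⟨w, hwB, h1w, h2w⟩ := nsub_of_not_sub e1
      obtain ⟨w', hw'B, h2w', h1w'⟩ := nsub_of_not_sub e2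
      by_cases f1 : Sub C.swap u1 u2
      · exact c4CompF C.swap hu2 hu1 hv1 hv2 hnu.symm f1
          ⟨w, hwB, h1w, h2w⟩ ⟨w', hw'B, h2w', h1w'⟩
      · by_cases f2 : Sub C.swap u2 u1
        · exact c4CompF C.swap hu1 hu2 hv1 hv2 hnu f2
            ⟨w, hwB, h1w, h2w⟩ ⟨w', hw'B, h2w', h1w'⟩
        · obtain ⟨z, hzB, h1z, h2z⟩ := nsub_of_not_sub (C := C.swap) f1
          obtain ⟨z', hz'B, h2z', h1z'⟩ := nsub_of_not_sub (C := C.swap) f2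
          exact c4EF C hv1 hv2 hu1 hu2 hB1 hB2 hwB h1w h2w hw'B h2w' h1w'
            hzB h1z h2z hz'B h2z' h1z'

end BicliqueAux


/-- Lemma 1: in a connected false-twin-free graph on at least 7 vertices, a biclique
containing a `K_{1,3}` or equal to a `C_4` meets at least 3 other bicliques. -/
theorem stmt_2 {V : Type} [Fintype V] (H : SimpleGraph V) (hconn : H.Connected)
    (htwinfree : ∀ v w : V, v ≠ w → H.neighborSet v ≠ H.neighborSet w)
    (hcard : 7 ≤ Fintype.card V)
    (B B1 B2 : Set V) (hB : IsBiclique H B)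
    (hpart : IsCBP H B1 B2) (hunion : B1 ∪ B2 = B)
    (hsize : 3 ≤ B1.ncard ∨ 3 ≤ B2.ncard ∨ (B1.ncard = 2 ∧ B2.ncard = 2)) :
    3 ≤ {S : Set V | IsBiclique H S ∧ S ≠ B ∧ (S ∩ B).Nonempty}.ncard := by
  classical
  by_contra hcon
  have hS2 : (BicliqueAux.SSet H B).ncard ≤ 2 := by
    unfold BicliqueAux.SSet
    omega
  let C : BicliqueAux.Ctx V := ⟨H, B, B1, B2, hconn, htwinfree, hcard, hB, hpart, hunion, hS2⟩
  rcases hsize with h3 | h3 | ⟨h21, h22⟩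
  · obtain ⟨t, hts, ht3⟩ := Set.exists_subset_card_eq h3
    obtain ⟨a, b, c, hab, hac, hbc, rfl⟩ := Set.ncard_eq_three.1 ht3
    exact BicliqueAux.k13 C (hts (by simp) : a ∈ C.B1) (hts (by simp)) (hts (by simp))
      hab hac hbc
  · obtain ⟨t, hts, ht3⟩ := Set.exists_subset_card_eq h3
    obtain ⟨a, b, c, hab, hac, hbc, rfl⟩ := Set.ncard_eq_three.1 ht3
    exact BicliqueAux.k13 C.swap (hts (by simp) : a ∈ C.swap.B1) (hts (by simp))
      (hts (by simp)) hab hac hbc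
  · obtain ⟨v1, v2, hnv, hB1eq⟩ := Set.ncard_eq_two.1 h21
    obtain ⟨u1, u2, hnu, hB2eq⟩ := Set.ncard_eq_two.1 h22
    refine BicliqueAux.c4 C (v1 := v1) (v2 := v2) (u1 := u1) (u2 := u2) ?_ ?_ ?_ ?_ hnv hnu ?_ ?_
    · rw [show C.B1 = B1 from rfl, hB1eq]; simp
    · rw [show C.B1 = B1 from rfl, hB1eq]; simp
    · rw [show C.B2 = B2 from rfl, hB2eq]; simp
    · rw [show C.B2 = B2 from rfl, hB2eq]; simp
    · intro t ht
      rw [show C.B1 = B1 from rfl, hB1eq] at ht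
      simpa using ht
    · intro t ht
      rw [show C.B2 = B2 from rfl, hB2eq] at ht
      simpa using ht
end
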